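/- arXiv:1001.2385 — 7 statements merged into one kernel-verified Lean document; each statement's English description precedes it below -/
import Mathlib

section
/- Along any solution of the planar system with γ ≠ 1 that stays in the half-plane x > 0, the function φ(x,y) = -(2b/3)·x^{3(1-γ)} + x^{2-3γ} + y²/x^{3γ} is a first integral. Precisely: let γ, b be real numbers with b > 0 and γ ≠ 1, and let x, y : ℝ → ℝ be differentiable functions satisfying x'(t) = -x(t)·y(t) and y'(t) = b(γ-1)·x(t)³ - ((3γ-2)/2)·x(t)² - (3γ/2)·y(t)² for all t, with x(t) > 0 for all t. Then the function t ↦ -(2b/3)·x(t)^{3(1-γ)} + x(t)^{2-3γ} + y(t)²/x(t)^{3γ} is constant on ℝ. -/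
/-- Along any solution of the planar system `ẋ = -x y`,
`ẏ = b(γ-1)x³ - ((3γ-2)/2)x² - (3γ/2)y²` with `γ ≠ 1` staying in the half-plane
`x > 0`, the function `φ(x,y) = -(2b/3)x^(3(1-γ)) + x^(2-3γ) + y²/x^(3γ)` is a
first integral. -/
theorem first_integral_gamma_ne_one
    (γ b : ℝ) (hb : 0 < b) (hγ : γ ≠ 1)
    (x y : ℝ → ℝ)
    (hx : ∀ t, HasDerivAt x (-(x t * y t)) t)
    (hy : ∀ t, HasDerivAt y
      (b * (γ - 1) * x t ^ 3 - (3 * γ - 2) / 2 * x t ^ 2 - 3 * γ / 2 * y t ^ 2) t)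
    (hxpos : ∀ t, 0 < x t) :
    ∀ s t : ℝ,
      -(2 * b / 3) * x s ^ (3 * (1 - γ)) + x s ^ (2 - 3 * γ) + y s ^ 2 / x s ^ (3 * γ)
        = -(2 * b / 3) * x t ^ (3 * (1 - γ)) + x t ^ (2 - 3 * γ) + y t ^ 2 / x t ^ (3 * γ) := by
  have hxne : ∀ t, x t ≠ 0 := fun t => (hxpos t).ne'
  have hpow : ∀ (r : ℝ) (t : ℝ),
      HasDerivAt (fun t => x t ^ r) (-(r * x t ^ r * y t)) t := by
    intro r t
    have h := (hx t).rpow_const (p := r) (Or.inl (hxne t))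
    convert h using 1
    have : x t ^ r = x t ^ (r - 1) * x t := by
      rw [← Real.rpow_add_one (hxne t)]; ring_nf
    rw [this]; ring
  set φ : ℝ → ℝ := fun t =>
    -(2 * b / 3) * x t ^ (3 * (1 - γ)) + x t ^ (2 - 3 * γ) + y t ^ 2 / x t ^ (3 * γ) with hφdef
  have hderiv : ∀ t, HasDerivAt φ 0 t := by
    intro t
    have h1 := (hpow (3 * (1 - γ)) t).const_mul (-(2 * b / 3))
    have h2 := hpow (2 - 3 * γ) t
    have hy2 : HasDerivAt (fun t => y t ^ 2)
        (2 * y t ^ 1 * (b * (γ - 1) * x t ^ 3 - (3 * γ - 2) / 2 * x t ^ 2 - 3 * γ / 2 * y t ^ 2)) t := by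
      simpa using (hy t).fun_pow 2
    have hvne : x t ^ (3 * γ) ≠ 0 := (Real.rpow_pos_of_pos (hxpos t) _).ne'
    have h3 := hy2.fun_div (hpow (3 * γ) t) hvne
    have h : HasDerivAt φ _ t := (h1.fun_add h2).fun_add h3
    convert h using 1
    have e1 : x t ^ (3 * (1 - γ)) * x t ^ (3 * γ) = x t ^ 3 := by
      rw [← Real.rpow_add (hxpos t)]
      rw [show (3 * (1 - γ) + 3 * γ : ℝ) = (3 : ℕ) by push_cast; ring, Real.rpow_natCast]
    have e2 : x t ^ (2 - 3 * γ) * x t ^ (3 * γ) = x t ^ 2 := by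
      rw [← Real.rpow_add (hxpos t)]
      rw [show (2 - 3 * γ + 3 * γ : ℝ) = (2 : ℕ) by push_cast; ring, Real.rpow_natCast]
    rw [show x t ^ 3 = x t ^ (3 * (1 - γ)) * x t ^ (3 * γ) from e1.symm,
      show x t ^ 2 = x t ^ (2 - 3 * γ) * x t ^ (3 * γ) from e2.symm]
    field_simp
    ring
  have hdiff : Differentiable ℝ φ := fun t => (hderiv t).differentiableAt
  have hd0 : ∀ t, deriv φ t = 0 := fun t => (hderiv t).deriv
  intro s t
  exact is_const_of_deriv_eq_zero hdiff hd0 s t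
end

section
/- Along any solution of the planar system with γ = 1 that stays in the half-plane x > 0, the function φ(x,y) = 1/x + y²/x³ is a first integral. Precisely: let b > 0 and let x, y : ℝ → ℝ be differentiable functions satisfying x'(t) = -x(t)·y(t) and y'(t) = b·0·x(t)³ - (1/2)·x(t)² - (3/2)·y(t)² (i.e. y'(t) = -(1/2)·x(t)² - (3/2)·y(t)²) for all t, with x(t) > 0 for all t. Then the function t ↦ 1/x(t) + y(t)²/x(t)³ is constant on ℝ. -/
/-- Along any solution of the planar system with `γ = 1`, i.e.
`ẋ = -x y`, `ẏ = b·0·x³ - (1/2)x² - (3/2)y²`, staying in the half-plane `x > 0`,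
the function `φ(x,y) = 1/x + y²/x³` is a first integral. -/
theorem first_integral_gamma_eq_one
    (b : ℝ) (hb : 0 < b)
    (x y : ℝ → ℝ)
    (hx : ∀ t, HasDerivAt x (-(x t * y t)) t)
    (hy : ∀ t, HasDerivAt y
      (b * 0 * x t ^ 3 - 1 / 2 * x t ^ 2 - 3 / 2 * y t ^ 2) t)
    (hxpos : ∀ t, 0 < x t) :
    ∀ s t : ℝ,
      1 / x s + y s ^ 2 / x s ^ 3 = 1 / x t + y t ^ 2 / x t ^ 3 := by
  have key : ∀ t : ℝ, HasDerivAt (fun t => 1 / x t + y t ^ 2 / x t ^ 3) 0 t := by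
    intro t
    have hxne : x t ≠ 0 := (hxpos t).ne'
    have hx3ne : x t ^ 3 ≠ 0 := pow_ne_zero _ hxne
    have h1 : HasDerivAt (fun t => 1 / x t)
        ((0 * x t - 1 * (-(x t * y t))) / x t ^ 2) t :=
      (hasDerivAt_const t (1:ℝ)).div (hx t) hxne
    have h2 : HasDerivAt (fun t => y t ^ 2)
        (2 * y t ^ 1 * (b * 0 * x t ^ 3 - 1 / 2 * x t ^ 2 - 3 / 2 * y t ^ 2)) t :=
      by simpa using (hy t).fun_pow 2
    have h3 : HasDerivAt (fun t => x t ^ 3)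
        (3 * x t ^ 2 * (-(x t * y t))) t := by
      simpa using (hx t).fun_pow 3
    have h4 : HasDerivAt (fun t => y t ^ 2 / x t ^ 3)
        ((2 * y t ^ 1 * (b * 0 * x t ^ 3 - 1 / 2 * x t ^ 2 - 3 / 2 * y t ^ 2) * x t ^ 3
          - y t ^ 2 * (3 * x t ^ 2 * (-(x t * y t)))) / (x t ^ 3) ^ 2) t :=
      h2.div h3 hx3ne
    have := h1.add h4
    refine this.congr_deriv ?_
    field_simp
    ring
  intro s t
  have : ∀ u v : ℝ, u ≤ v → (1 / x u + y u ^ 2 / x u ^ 3) = (1 / x v + y v ^ 2 / x v ^ 3) := by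
    intro u v huv
    exact (constant_of_has_deriv_right_zero
      (fun w _ => (key w).continuousAt.continuousWithinAt)
      (fun w _ => (key w).hasDerivWithinAt) v (by exact ⟨huv, le_rfl⟩)).symm ▸ rfl
  rcases le_total s t with h | h
  · exact this s t h
  · exact (this t s h).symm
end

section
/- (Theorem 2(i)) For every γ ∈ (2/3, 2] and every b > 0, there is no solution of the planar system that asymptotically approaches the origin from the physical half-plane. Precisely: there exist no differentiable functions x, y : ℝ → ℝ satisfying x'(t) = -x(t)·y(t) and y'(t) = b(γ-1)·x(t)³ - ((3γ-2)/2)·x(t)² - (3γ/2)·y(t)² for all t, with x(t) > 0 for all t, such that (x(t), y(t)) → (0, 0) as t → +∞. -/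
open Filter Set Real

/-- Theorem 2(i): for every `γ ∈ (2/3, 2]` and every `b > 0`, no solution of the
planar system staying in the half-plane `x > 0` asymptotically approaches the
origin as `t → +∞`. -/
theorem no_solution_approaching_origin
    (γ b : ℝ) (hγ : γ ∈ Set.Ioc (2 / 3 : ℝ) 2) (hb : 0 < b) :
    ¬ ∃ x y : ℝ → ℝ,
      (∀ t, HasDerivAt x (-(x t * y t)) t) ∧
      (∀ t, HasDerivAt y
        (b * (γ - 1) * x t ^ 3 - (3 * γ - 2) / 2 * x t ^ 2 - 3 * γ / 2 * y t ^ 2) t) ∧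
      (∀ t, 0 < x t) ∧
      Filter.Tendsto (fun t => (x t, y t)) Filter.atTop (nhds ((0 : ℝ), (0 : ℝ))) := by
  rintro ⟨x, y, hx, hy, hxpos, hconv⟩
  obtain ⟨hγ1, hγ2⟩ := hγ
  have h3γ : 0 < 3 * γ - 2 := by linarith
  set c : ℝ := 2 / (3 * γ - 2) with hc
  have hcpos : 0 < c := by positivity
  have habs : (0:ℝ) ≤ |γ - 1| := abs_nonneg _
  set x₀ : ℝ := (3 * γ - 2) / (4 * b * (|γ - 1| + 1)) with hx₀
  have hx₀pos : 0 < x₀ := by positivity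
  have hxlim : Tendsto x atTop (nhds 0) := (continuous_fst.tendsto _).comp hconv
  have hylim : Tendsto y atTop (nhds 0) := (continuous_snd.tendsto _).comp hconv
  obtain ⟨T, hT⟩ := eventually_atTop.1 (hxlim.eventually (eventually_lt_nhds hx₀pos))
  -- key smallness bound
  have hbound : ∀ t, T ≤ t → b * (γ - 1) * x t ≤ (3 * γ - 2) / 4 := by
    intro t ht
    have h1 : b * (γ - 1) * x t ≤ b * (|γ - 1| + 1) * x t := by
      have hle : γ - 1 ≤ |γ - 1| + 1 := by linarith [le_abs_self (γ - 1)]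
      exact mul_le_mul_of_nonneg_right (mul_le_mul_of_nonneg_left hle hb.le) (hxpos t).le
    have h2 : b * (|γ - 1| + 1) * x t ≤ b * (|γ - 1| + 1) * x₀ := by
      have hpos : 0 ≤ b * (|γ - 1| + 1) := by positivity
      exact mul_le_mul_of_nonneg_left (hT t ht).le hpos
    have h3 : b * (|γ - 1| + 1) * x₀ = (3 * γ - 2) / 4 := by
      rw [hx₀]; field_simp
    linarith
  -- y derivative
  set Y : ℝ → ℝ := fun t => b * (γ - 1) * x t ^ 3 - (3 * γ - 2) / 2 * x t ^ 2
      - 3 * γ / 2 * y t ^ 2 with hY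
  -- y strictly decreasing on [T, ∞)
  have hanti : StrictAntiOn y (Ici T) := by
    apply strictAntiOn_of_deriv_neg (convex_Ici T)
      (fun t _ => (hy t).continuousAt.continuousWithinAt)
    intro t ht
    rw [interior_Ici] at ht
    rw [(hy t).deriv]
    have hb1 := hbound t ht.le
    have hxt := hxpos t
    nlinarith [sq_nonneg (y t), sq_nonneg (x t), mul_le_mul_of_nonneg_right hb1 (sq_nonneg (x t)), mul_pos hxt hxt]
  -- y positive on [T, ∞)
  have hypos : ∀ t, T ≤ t → 0 < y t := by
    intro t ht
    by_contra hle
    push_neg at hle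
    have h1 : y (t + 1) < y t := hanti (mem_Ici.2 ht) (mem_Ici.2 (by linarith)) (lt_add_one t)
    have hev : ∀ᶠ s in atTop, y s ≤ y (t + 1) := by
      rw [eventually_atTop]
      refine ⟨t + 1, fun s hs => ?_⟩
      rcases eq_or_lt_of_le hs with h | h
      · rw [← h]
      · exact (hanti (mem_Ici.2 (by linarith)) (mem_Ici.2 (by linarith)) h).le
    have := le_of_tendsto hylim hev
    linarith
  -- the Lyapunov-type function
  set G : ℝ → ℝ := fun t => Real.log (x t) - c * (y t / x t) with hG
  set D : ℝ → ℝ := fun t => -(x t * y t) / x t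
      - c * ((Y t * x t - y t * (-(x t * y t))) / x t ^ 2) with hD
  have hGd : ∀ t, HasDerivAt G (D t) t := by
    intro t
    have h1 : HasDerivAt (fun s => Real.log (x s)) (-(x t * y t) / x t) t :=
      (hx t).log (ne_of_gt (hxpos t))
    have h2 : HasDerivAt (fun s => y s / x s)
        ((Y t * x t - y t * (-(x t * y t))) / x t ^ 2) t :=
      (hy t).div (hx t) (ne_of_gt (hxpos t))
    exact h1.sub (h2.const_mul c)
  have hcc : c * ((3 * γ - 2) / 4) = 1 / 2 := by
    rw [hc]; field_simp; ring
  have hDnn : ∀ t, T ≤ t → 0 ≤ D t := by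
    intro t ht
    have hxt := hxpos t
    have hb1 := hbound t ht
    have h5 : c * (b * (γ - 1) * x t) ≤ c * ((3 * γ - 2) / 4) :=
      mul_le_mul_of_nonneg_left hb1 hcpos.le
    have h7 : c * (b * (γ - 1)) * x t ^ 3 ≤ x t ^ 2 / 2 := by
      nlinarith [mul_le_mul_of_nonneg_right (h5.trans_eq hcc) (sq_nonneg (x t))]
    have hE : 0 ≤ x t * (x t ^ 2 + y t ^ 2 - x t * y t - c * (b * (γ - 1)) * x t ^ 3) := by
      apply mul_nonneg hxt.le
      nlinarith [sq_nonneg (x t - y t), sq_nonneg (y t)]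
    have hDE : D t = x t * (x t ^ 2 + y t ^ 2 - x t * y t - c * (b * (γ - 1)) * x t ^ 3)
        / x t ^ 2 := by
      rw [hD, hY, hc]
      field_simp
      ring
    rw [hDE]
    exact div_nonneg hE (sq_nonneg _)
  have hmono : MonotoneOn G (Ici T) := by
    apply monotoneOn_of_deriv_nonneg (convex_Ici T)
      (fun t _ => (hGd t).continuousAt.continuousWithinAt)
      (fun t ht => ((hGd t).differentiableAt).differentiableWithinAt)
    intro t ht
    rw [interior_Ici] at ht
    rw [(hGd t).deriv]
    exact hDnn t ht.le
  have hlow : ∀ t, T ≤ t → Real.exp (G T) ≤ x t := by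
    intro t ht
    have h1 : G T ≤ G t := hmono (mem_Ici.2 le_rfl) (mem_Ici.2 ht) ht
    have h2 : G t ≤ Real.log (x t) := by
      have : 0 ≤ c * (y t / x t) :=
        mul_nonneg hcpos.le (div_nonneg (hypos t ht).le (hxpos t).le)
      rw [hG]; dsimp only; linarith
    calc Real.exp (G T) ≤ Real.exp (Real.log (x t)) := Real.exp_le_exp.2 (h1.trans h2)
      _ = x t := Real.exp_log (hxpos t)
  have hfin : Real.exp (G T) ≤ 0 := by
    apply ge_of_tendsto hxlim
    exact eventually_atTop.2 ⟨T, hlow⟩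
  linarith [Real.exp_pos (G T)]
end

section
/- (Theorem 2(iii), existence) For every γ ∈ (1, 2] and every b > 0, the planar system possesses a nonconstant periodic solution in the half-plane x > 0: there exist differentiable functions x, y : ℝ → ℝ satisfying x'(t) = -x(t)·y(t) and y'(t) = b(γ-1)·x(t)³ - ((3γ-2)/2)·x(t)² - (3γ/2)·y(t)² for all t, with x(t) > 0 for all t, such that (x, y) is nonconstant and there exists T > 0 with x(t+T) = x(t) and y(t+T) = y(t) for all t. -/
open Real Set Filter Topology

namespace PeriodicAux
namespace PeriodicAux

/-- `gE s = g(e^s)` where `g(x) = x^(2-3γ) - (2b/3) x^(3-3γ)` : the level function. -/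
noncomputable def gE (γ b s : ℝ) : ℝ := exp (-(3*γ-2)*s) - 2*b/3 * exp (-(3*γ-3)*s)

/-- derivative of `gE`. -/
noncomputable def gD (γ b s : ℝ) : ℝ :=
  -(3*γ-2) * exp (-(3*γ-2)*s) + (3*γ-3) * (2*b/3) * exp (-(3*γ-3)*s)

lemma hasDerivAt_gE (γ b s : ℝ) : HasDerivAt (gE γ b) (gD γ b s) s := by
  have h1 : HasDerivAt (fun s : ℝ => exp (-(3*γ-2)*s)) (-(3*γ-2) * exp (-(3*γ-2)*s)) s := by
    simpa [mul_comm] using (((hasDerivAt_id s).const_mul (-(3*γ-2))).exp)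
  have h2 : HasDerivAt (fun s : ℝ => 2*b/3 * exp (-(3*γ-3)*s))
      (2*b/3 * (-(3*γ-3) * exp (-(3*γ-3)*s))) s := by
    exact (by simpa [mul_comm] using (((hasDerivAt_id s).const_mul (-(3*γ-3))).exp) :
      HasDerivAt (fun s : ℝ => exp (-(3*γ-3)*s)) (-(3*γ-3) * exp (-(3*γ-3)*s)) s).const_mul _
  have := h1.sub h2
  refine this.congr_deriv ?_
  unfold gD; ring

lemma gE_eq (γ b s : ℝ) : gE γ b s = exp (-(3*γ-2)*s) * (1 - 2*b/3 * exp s) := by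
  unfold gE
  rw [show -(3*γ-3)*s = -(3*γ-2)*s + s by ring, exp_add]; ring

lemma gD_eq (γ b s : ℝ) :
    gD γ b s = exp (-(3*γ-2)*s) * (2*b*(3*γ-3)/3 * exp s - (3*γ-2)) := by
  unfold gD
  rw [show -(3*γ-3)*s = -(3*γ-2)*s + s by ring, exp_add]; ring

section params
variable {γ b : ℝ} (hγ : 1 < γ) (hb : 0 < b)

/-- location of the minimum of `gE`. -/
noncomputable def sStar (γ b : ℝ) : ℝ := log (3*(3*γ-2) / (2*b*(3*γ-3)))

include hγ hb

lemma exp_sStar : exp (sStar γ b) = 3*(3*γ-2) / (2*b*(3*γ-3)) := by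
  rw [sStar, exp_log]
  have h1 : 0 < 3*γ-2 := by linarith
  have h2 : 0 < 2*b*(3*γ-3) := by nlinarith
  positivity

lemma gD_neg {s : ℝ} (h : s < sStar γ b) : gD γ b s < 0 := by
  rw [gD_eq]
  apply mul_neg_of_pos_of_neg (exp_pos _)
  have h1 : exp s < exp (sStar γ b) := exp_lt_exp.mpr h
  rw [exp_sStar hγ hb, lt_div_iff₀ (by nlinarith : (0:ℝ) < 2*b*(3*γ-3))] at h1
  nlinarith

lemma gD_pos {s : ℝ} (h : sStar γ b < s) : 0 < gD γ b s := by
  rw [gD_eq]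
  apply mul_pos (exp_pos _)
  have h1 : exp (sStar γ b) < exp s := exp_lt_exp.mpr h
  rw [exp_sStar hγ hb, div_lt_iff₀ (by nlinarith : (0:ℝ) < 2*b*(3*γ-3))] at h1
  nlinarith

lemma gE_strictAntiOn : StrictAntiOn (gE γ b) (Iic (sStar γ b)) := by
  apply strictAntiOn_of_deriv_neg (convex_Iic _)
    (fun s _ => (hasDerivAt_gE γ b s).continuousAt.continuousWithinAt)
  intro s hs
  rw [interior_Iic] at hs
  rw [(hasDerivAt_gE γ b s).deriv]
  exact gD_neg hγ hb hs

lemma gE_strictMonoOn : StrictMonoOn (gE γ b) (Ici (sStar γ b)) := by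
  apply strictMonoOn_of_deriv_pos (convex_Ici _)
    (fun s _ => (hasDerivAt_gE γ b s).continuousAt.continuousWithinAt)
  intro s hs
  rw [interior_Ici] at hs
  rw [(hasDerivAt_gE γ b s).deriv]
  exact gD_pos hγ hb hs

lemma gE_pos {s : ℝ} (h : s < log (3/(2*b))) : 0 < gE γ b s := by
  rw [gE_eq]
  apply mul_pos (exp_pos _)
  have h1 : exp s < exp (log (3/(2*b))) := exp_lt_exp.mpr h
  rw [exp_log (by positivity)] at h1
  have h2 : 0 < 2*b := by linarith
  rw [lt_div_iff₀ h2] at h1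
  nlinarith

lemma gE_neg {s : ℝ} (h : log (3/(2*b)) < s) : gE γ b s < 0 := by
  rw [gE_eq]
  apply mul_neg_of_pos_of_neg (exp_pos _)
  have h1 : exp (log (3/(2*b))) < exp s := exp_lt_exp.mpr h
  rw [exp_log (by positivity)] at h1
  have h2 : 0 < 2*b := by linarith
  rw [div_lt_iff₀ h2] at h1
  nlinarith

lemma Estar_neg : gE γ b (sStar γ b) < 0 := by
  obtain ⟨s0, hs0⟩ : ∃ s0, s0 = max (sStar γ b) (log (3/(2*b))) + 1 := ⟨_, rfl⟩
  have h1 : gE γ b s0 < 0 := gE_neg hγ hb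
    (by have := le_max_right (sStar γ b) (log (3/(2*b))); rw [hs0]; linarith)
  have hlt : sStar γ b < s0 := by
    have := le_max_left (sStar γ b) (log (3/(2*b))); rw [hs0]; linarith
  have h2 : gE γ b (sStar γ b) < gE γ b s0 :=
    (gE_strictMonoOn hγ hb) self_mem_Ici (le_of_lt hlt) hlt
  linarith

lemma exists_levels :
    ∃ E s1 s2 : ℝ, s1 < sStar γ b ∧ sStar γ b < s2 ∧ E < 0 ∧
      gE γ b s1 = E ∧ gE γ b s2 = E ∧ (∀ s ∈ Ioo s1 s2, gE γ b s < E) := by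
  obtain ⟨E, hE⟩ : ∃ E, E = gE γ b (sStar γ b) / 2 := ⟨_, rfl⟩
  have hEstar : gE γ b (sStar γ b) < 0 := Estar_neg hγ hb
  have hEneg : E < 0 := by rw [hE]; linarith
  have hEgt : gE γ b (sStar γ b) < E := by rw [hE]; linarith
  -- find s1 by IVT on [sBar, sStar]
  obtain ⟨sBar, hsBar⟩ : ∃ sBar, sBar = min (sStar γ b) (log (3/(2*b))) - 1 := ⟨_, rfl⟩
  have hsBarlt : sBar < sStar γ b := by
    have := min_le_left (sStar γ b) (log (3/(2*b))); rw [hsBar]; linarith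
  have hgBar : 0 < gE γ b sBar := gE_pos hγ hb
    (by have := min_le_right (sStar γ b) (log (3/(2*b))); rw [hsBar]; linarith)
  have hcont : ∀ u v : ℝ, ContinuousOn (gE γ b) (Icc u v) :=
    fun u v => fun s _ => (hasDerivAt_gE γ b s).continuousAt.continuousWithinAt
  have h1 : E ∈ Icc (gE γ b (sStar γ b)) (gE γ b sBar) := ⟨le_of_lt hEgt, by linarith⟩
  obtain ⟨s1, hs1mem, hs1⟩ := intermediate_value_Icc' (le_of_lt hsBarlt) (hcont _ _) h1
  have hs1lt : s1 < sStar γ b := by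
    rcases lt_or_eq_of_le hs1mem.2 with h | h
    · exact h
    · exfalso; rw [h] at hs1; rw [hs1] at hEgt; exact lt_irrefl _ hEgt
  -- find s2 by IVT on [sStar, sHat]
  obtain ⟨sHat, hsHat⟩ : ∃ sHat, sHat = max (sStar γ b) (-log (3*(-E)/(2*b))/(3*γ-3)) + 1 :=
    ⟨_, rfl⟩
  have hsHatgt : sStar γ b < sHat := by
    have := le_max_left (sStar γ b) (-log (3*(-E)/(2*b))/(3*γ-3)); rw [hsHat]; linarith
  have hgHat : E < gE γ b sHat := by
    have hc : 0 < 3*γ-3 := by linarith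
    have hkey : 2*b/3 * exp (-(3*γ-3)*sHat) < -E := by
      have h3 : -log (3*(-E)/(2*b))/(3*γ-3) < sHat := by
        have := le_max_right (sStar γ b) (-log (3*(-E)/(2*b))/(3*γ-3)); rw [hsHat]; linarith
      have h4 : -(3*γ-3)*sHat < log (3*(-E)/(2*b)) := by
        rw [div_lt_iff₀ hc] at h3; nlinarith
      have h5 : exp (-(3*γ-3)*sHat) < 3*(-E)/(2*b) := by
        calc exp (-(3*γ-3)*sHat) < exp (log (3*(-E)/(2*b))) := exp_lt_exp.mpr h4
        _ = 3*(-E)/(2*b) := exp_log (by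
              apply div_pos (by linarith) (by linarith))
      have h6 : 0 < 2*b := by linarith
      rw [lt_div_iff₀ h6] at h5
      nlinarith
    have : -(2*b/3 * exp (-(3*γ-3)*sHat)) > E := by linarith
    unfold gE
    have := exp_pos (-(3*γ-2)*sHat)
    linarith
  have h2 : E ∈ Icc (gE γ b (sStar γ b)) (gE γ b sHat) := ⟨le_of_lt hEgt, le_of_lt hgHat⟩
  obtain ⟨s2, hs2mem, hs2⟩ := intermediate_value_Icc (le_of_lt hsHatgt) (hcont _ _) h2
  have hs2gt : sStar γ b < s2 := by
    rcases lt_or_eq_of_le hs2mem.1 with h | h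
    · exact h
    · exfalso; rw [← h] at hs2; rw [hs2] at hEgt; exact lt_irrefl _ hEgt
  refine ⟨E, s1, s2, hs1lt, hs2gt, hEneg, hs1, hs2, ?_⟩
  intro s hs
  rcases le_or_gt s (sStar γ b) with h | h
  · have : gE γ b s < gE γ b s1 :=
      (gE_strictAntiOn hγ hb) (le_of_lt hs1lt) h hs.1
    linarith [hs1 ▸ this]
  · have : gE γ b s < gE γ b s2 :=
      (gE_strictMonoOn hγ hb) (le_of_lt h) (le_of_lt hs2gt) hs.2
    linarith [hs2 ▸ this]

end params
end PeriodicAux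
namespace PeriodicAux

noncomputable def sdiv (f : ℝ → ℝ) (z d : ℝ) : ℝ → ℝ :=
  fun u => if u = z then d else f u / (u - z)

/-- the function `G u / (1 - u^2)` with singularities at `±1` removed. -/
noncomputable def Kf (G : ℝ → ℝ) (d1 dm1 : ℝ) : ℝ → ℝ :=
  fun u => if u ≤ 0 then sdiv G (-1) dm1 u / (1 - u) else -(sdiv G 1 d1 u) / (1 + u)

section K
variable {G Gd : ℝ → ℝ} {d1 dm1 : ℝ}

lemma sdiv_apply_ne {f : ℝ → ℝ} {z d u : ℝ} (hu : u ≠ z) :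
    sdiv f z d u = f u / (u - z) := if_neg hu

lemma sdiv_apply_self {f : ℝ → ℝ} {z d : ℝ} : sdiv f z d z = d := if_pos rfl

lemma Kf_one : Kf G d1 dm1 1 = -d1/2 := by
  unfold Kf
  rw [if_neg (by norm_num), sdiv_apply_self]
  norm_num

lemma Kf_neg_one : Kf G d1 dm1 (-1) = dm1/2 := by
  unfold Kf
  rw [if_pos (by norm_num), sdiv_apply_self]
  norm_num

variable (h1 : G 1 = 0) (hm1 : G (-1) = 0)

include h1 hm1 in
lemma Kf_mul (u : ℝ) : (1 - u^2) * Kf G d1 dm1 u = G u := by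
  unfold Kf
  rcases le_or_gt u 0 with h | h
  · rw [if_pos h]
    rcases eq_or_ne u (-1) with rfl | hne
    · rw [sdiv_apply_self]; simpa using hm1.symm
    · rw [sdiv_apply_ne hne]
      have hu1 : u - (-1) ≠ 0 := sub_ne_zero.mpr hne
      have hu2 : (1:ℝ) - u ≠ 0 := by intro hc; nlinarith
      have hprod : (1:ℝ) - u^2 ≠ 0 := by
        rw [show (1:ℝ) - u^2 = (u - -1)*(1-u) by ring]
        exact mul_ne_zero hu1 hu2
      rw [div_div, show (u - -1) * (1 - u) = 1 - u^2 by ring, mul_div_cancel₀ _ hprod]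
  · rw [if_neg (not_le.mpr h)]
    rcases eq_or_ne u 1 with rfl | hne
    · rw [sdiv_apply_self]; simpa using h1.symm
    · rw [sdiv_apply_ne hne]
      have hu1 : u - 1 ≠ 0 := sub_ne_zero.mpr hne
      have hu2 : (1:ℝ) + u ≠ 0 := by positivity
      have hprod : (1:ℝ) - u^2 ≠ 0 := by
        rw [show (1:ℝ) - u^2 = -((u - 1)*(1+u)) by ring]
        exact neg_ne_zero.mpr (mul_ne_zero hu1 hu2)
      rw [neg_div, div_div, show (u - 1) * (1 + u) = -(1 - u^2) by ring, div_neg,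
        neg_neg, mul_div_cancel₀ _ hprod]

include h1 hm1 in
lemma Kf_eq_of_ne {u : ℝ} (hne1 : u ≠ 1) (hnem1 : u ≠ -1) :
    Kf G d1 dm1 u = G u / (1 - u^2) := by
  have hne : (1:ℝ) - u^2 ≠ 0 := by
    intro hc
    have h2 : (u - 1) * (u + 1) = 0 := by nlinarith
    rcases mul_eq_zero.mp h2 with h | h
    · exact hne1 (by linarith)
    · exact hnem1 (by linarith)
  rw [← Kf_mul (G := G) (d1 := d1) (dm1 := dm1) h1 hm1 u]
  field_simp

lemma sdiv_mul {f : ℝ → ℝ} {z d : ℝ} (hz : f z = 0) (u : ℝ) :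
    (u - z) * sdiv f z d u = f u := by
  rcases eq_or_ne u z with h | h
  · simp [h, sdiv_apply_self, hz]
  · rw [sdiv_apply_ne h]
    field_simp [sub_ne_zero.mpr h]

lemma sdiv_differentiableAt_ne {f : ℝ → ℝ} {z d u : ℝ} (hu : u ≠ z)
    (hf : DifferentiableAt ℝ f u) :
    DifferentiableAt ℝ (sdiv f z d) u := by
  have h1 : DifferentiableAt ℝ (fun v => f v / (v - z)) u := by
    exact hf.div ((differentiableAt_id.sub (differentiableAt_const z))) (sub_ne_zero.mpr hu)
  apply h1.congr_of_eventuallyEq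
  filter_upwards [isOpen_ne.mem_nhds hu] with v hv
  exact sdiv_apply_ne hv

lemma sdiv_differentiableAt_self {f f' : ℝ → ℝ} {z κ : ℝ}
    (hf : ∀ u, HasDerivAt f (f' u) u) (hf' : HasDerivAt f' κ z) (hz : f z = 0) :
    DifferentiableAt ℝ (sdiv f z (f' z)) z := by
  -- slope of sdiv at z equals N u / D u with N u = f u - f' z * (u - z), D u = (u-z)^2
  have hslope : Tendsto (slope (sdiv f z (f' z)) z) (𝓝[≠] z) (𝓝 (κ / 2)) := by
    have hN : ∀ u, HasDerivAt (fun u => f u - f' z * (u - z)) (f' u - f' z) u := by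
      intro u
      simpa using (hf u).fun_sub (((hasDerivAt_id u).sub_const z).const_mul (f' z))
    have hD : ∀ u : ℝ, HasDerivAt (fun u => (u - z) ^ 2) (2 * (u - z)) u := by
      intro u
      simpa [mul_comm] using ((hasDerivAt_id u).sub_const z).fun_pow 2
    have hdiv : Tendsto (fun u => (f' u - f' z) / (2 * (u - z))) (𝓝[≠] z) (𝓝 (κ / 2)) := by
      have h1 : Tendsto (slope f' z) (𝓝[≠] z) (𝓝 κ) := hasDerivAt_iff_tendsto_slope.mp hf'
      have h2 : Tendsto (fun u => slope f' z u / 2) (𝓝[≠] z) (𝓝 (κ / 2)) :=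
        h1.div_const 2
      apply h2.congr'
      filter_upwards [self_mem_nhdsWithin] with u (hu : u ≠ z)
      have : u - z ≠ 0 := sub_ne_zero.mpr hu
      rw [slope_def_field, div_div, mul_comm]
    have hL := HasDerivAt.lhopital_zero_nhdsNE
      (f := fun u => f u - f' z * (u - z)) (f' := fun u => f' u - f' z)
      (g := fun u => (u - z) ^ 2) (g' := fun u => 2 * (u - z))
      ((Eventually.of_forall hN).filter_mono nhdsWithin_le_nhds)
      ((Eventually.of_forall hD).filter_mono nhdsWithin_le_nhds)
      (by
        filter_upwards [self_mem_nhdsWithin] with u (hu : u ≠ z)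
        have : u - z ≠ 0 := sub_ne_zero.mpr hu
        positivity)
      (by
        have hc : ContinuousAt (fun u => f u - f' z * (u - z)) z :=
          ((hf z).continuousAt).sub (by fun_prop)
        have := hc.tendsto
        rw [show f z - f' z * (z - z) = 0 by simp [hz]] at this
        exact this.mono_left nhdsWithin_le_nhds)
      (by
        have hc : ContinuousAt (fun u : ℝ => (u - z) ^ 2) z := by fun_prop
        have := hc.tendsto
        rw [show (z - z) ^ 2 = (0:ℝ) by simp] at this
        exact this.mono_left nhdsWithin_le_nhds)
      hdiv
    -- identify slope with the quotient
    apply hL.congr'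
    filter_upwards [self_mem_nhdsWithin] with u (hu : u ≠ z)
    have hne : u - z ≠ 0 := sub_ne_zero.mpr hu
    rw [slope_def_field, sdiv_apply_ne hu, sdiv_apply_self]
    field_simp
  exact (hasDerivAt_iff_tendsto_slope.mpr hslope).differentiableAt


include h1 hm1 in
lemma Kf_pos {u : ℝ} (hu : u ∈ Icc (-1:ℝ) 1)
    (hGpos : ∀ v ∈ Ioo (-1:ℝ) 1, 0 < G v) (hd1 : d1 < 0) (hdm1 : 0 < dm1) :
    0 < Kf G d1 dm1 u := by
  rcases eq_or_ne u 1 with rfl | hne1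
  · rw [Kf_one]; linarith
  rcases eq_or_ne u (-1) with rfl | hnem1
  · rw [Kf_neg_one]; linarith
  have huo : u ∈ Ioo (-1:ℝ) 1 := by
    constructor
    · exact lt_of_le_of_ne hu.1 (Ne.symm hnem1)
    · exact lt_of_le_of_ne hu.2 hne1
  rw [Kf_eq_of_ne h1 hm1 hne1 hnem1]
  apply div_pos (hGpos u huo)
  nlinarith [huo.1, huo.2]

variable {Gd : ℝ → ℝ} {κ1 κm1 : ℝ}

include h1 hm1 in
lemma Kf_differentiableAt (hG : ∀ u, HasDerivAt G (Gd u) u)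
    (hGd1 : HasDerivAt Gd κ1 1) (hGdm1 : HasDerivAt Gd κm1 (-1)) (u : ℝ) :
    DifferentiableAt ℝ (Kf G (Gd 1) (Gd (-1))) u := by
  have hden1 : ∀ v : ℝ, DifferentiableAt ℝ (fun v : ℝ => 1 - v) v := by fun_prop
  have hden2 : ∀ v : ℝ, DifferentiableAt ℝ (fun v : ℝ => 1 + v) v := by fun_prop
  have hnum1 : ∀ v : ℝ, DifferentiableAt ℝ (sdiv G 1 (Gd 1)) v := by
    intro v
    rcases eq_or_ne v 1 with rfl | hv
    · exact sdiv_differentiableAt_self hG hGd1 h1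
    · exact sdiv_differentiableAt_ne hv (hG v).differentiableAt
  have hnum2 : ∀ v : ℝ, DifferentiableAt ℝ (sdiv G (-1) (Gd (-1))) v := by
    intro v
    rcases eq_or_ne v (-1) with rfl | hv
    · exact sdiv_differentiableAt_self hG hGdm1 hm1
    · exact sdiv_differentiableAt_ne hv (hG v).differentiableAt
  rcases lt_trichotomy u 0 with h | h | h
  · -- on Iio 0, Kf agrees with the sdiv at -1 formula
    have hdiff : DifferentiableAt ℝ (fun v => sdiv G (-1) (Gd (-1)) v / (1 - v)) u :=
      (hnum2 u).div (hden1 u) (by intro hc; rw [sub_eq_zero] at hc; linarith)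
    apply hdiff.congr_of_eventuallyEq
    filter_upwards [Iio_mem_nhds h] with v (hv : v < 0)
    exact if_pos (le_of_lt hv)
  · -- at 0 : Kf agrees with the sdiv at 1 formula on Ioo (-1) 1
    subst h
    have hdiff : DifferentiableAt ℝ (fun v => -(sdiv G 1 (Gd 1) v) / (1 + v)) 0 :=
      ((hnum1 0).neg).div (hden2 0) (by norm_num)
    apply hdiff.congr_of_eventuallyEq
    filter_upwards [Ioo_mem_nhds (by norm_num : (-1:ℝ) < 0) (by norm_num : (0:ℝ) < 1)]
      with v hv
    have hv1 : v ≠ 1 := ne_of_lt hv.2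
    have hvm1 : v ≠ -1 := ne_of_gt hv.1
    rw [Kf_eq_of_ne h1 hm1 hv1 hvm1, sdiv_apply_ne hv1]
    have hd : (1:ℝ) - v^2 ≠ 0 := by nlinarith [hv.1, hv.2]
    have hd1' : v - 1 ≠ 0 := sub_ne_zero.mpr hv1
    have hd2' : (1:ℝ) + v ≠ 0 := by intro hc; apply hvm1; linarith
    field_simp
    ring
  · -- on Ioi 0
    have hdiff : DifferentiableAt ℝ (fun v => -(sdiv G 1 (Gd 1) v) / (1 + v)) u :=
      ((hnum1 u).neg).div (hden2 u) (by intro hc; linarith)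
    apply hdiff.congr_of_eventuallyEq
    filter_upwards [Ioi_mem_nhds h] with v (hv : 0 < v)
    exact if_neg (not_le.mpr hv)

end K
end PeriodicAux

namespace PeriodicAux

set_option maxHeartbeats 1000000 in
theorem core {γ b E s1 s2 : ℝ} (hγ : 1 < γ) (hb : 0 < b)
    (hs1 : s1 < sStar γ b) (hs2 : sStar γ b < s2)
    (hg1 : gE γ b s1 = E) (hg2 : gE γ b s2 = E)
    (hinner : ∀ s ∈ Ioo s1 s2, gE γ b s < E) :
    ∃ x y : ℝ → ℝ,
      (∀ t, HasDerivAt x (-(x t * y t)) t) ∧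
      (∀ t, HasDerivAt y
        (b * (γ - 1) * x t ^ 3 - (3 * γ - 2) / 2 * x t ^ 2 - 3 * γ / 2 * y t ^ 2) t) ∧
      (∀ t, 0 < x t) ∧
      (¬ ∃ c : ℝ × ℝ, ∀ t, (x t, y t) = c) ∧
      (∃ T > (0 : ℝ), ∀ t, x (t + T) = x t ∧ y (t + T) = y t) := by
  have hs12 : s1 < s2 := hs1.trans hs2
  set μ : ℝ := (s1 + s2)/2 with hμ
  set ρ : ℝ := (s2 - s1)/2 with hρ
  have hρpos : 0 < ρ := by rw [hρ]; linarith
  have hρne : ρ ≠ 0 := ne_of_gt hρpos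
  have hμρ1 : μ - ρ * 1 = s1 := by rw [hμ, hρ]; ring
  have hμρm1 : μ - ρ * (-1) = s2 := by rw [hμ, hρ]; ring
  -- the level function along the parametrized interval
  set G : ℝ → ℝ := fun u => E - gE γ b (μ - ρ * u) with hGdef
  set Gd : ℝ → ℝ := fun u => ρ * gD γ b (μ - ρ * u) with hGddef
  have hGder : ∀ u, HasDerivAt G (Gd u) u := by
    intro u
    have hin : HasDerivAt (fun u : ℝ => μ - ρ * u) (-ρ) u := by
      simpa using ((hasDerivAt_id u).const_mul ρ).const_sub μ
    have := ((hasDerivAt_gE γ b (μ - ρ * u)).comp u hin).const_sub E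
    refine this.congr_deriv ?_
    rw [hGddef]; ring
  have hG1 : G 1 = 0 := by rw [hGdef]; simp only [hμρ1, hg1, sub_self]
  have hGm1 : G (-1) = 0 := by rw [hGdef]; simp only [hμρm1, hg2, sub_self]
  have hGpos : ∀ v ∈ Ioo (-1:ℝ) 1, 0 < G v := by
    intro v hv
    have h1 : μ - ρ * v ∈ Ioo s1 s2 := by
      constructor
      · nlinarith [hv.2]
      · nlinarith [hv.1]
    have := hinner _ h1
    rw [hGdef]; simp only []; linarith
  have hGd1neg : Gd 1 < 0 := by
    rw [hGddef]; simp only [hμρ1]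
    exact mul_neg_of_pos_of_neg hρpos (gD_neg hγ hb hs1)
  have hGdm1pos : 0 < Gd (-1) := by
    rw [hGddef]; simp only [hμρm1]
    exact mul_pos hρpos (gD_pos hγ hb hs2)
  have hgDdiff : Differentiable ℝ (gD γ b) := by
    unfold gD; fun_prop
  have hGd_diff : ∀ u : ℝ, DifferentiableAt ℝ Gd u := by
    intro u; rw [hGddef]
    apply DifferentiableAt.const_mul
    exact (hgDdiff _).comp u (by fun_prop)
  -- the regularized quotient
  set K : ℝ → ℝ := Kf G (Gd 1) (Gd (-1)) with hKdef
  have hKdiff : ∀ u, DifferentiableAt ℝ K u :=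
    Kf_differentiableAt hG1 hGm1 hGder
      (hGd_diff 1).hasDerivAt (hGd_diff (-1)).hasDerivAt
  have hKpos : ∀ u ∈ Icc (-1:ℝ) 1, 0 < K u := fun u hu =>
    Kf_pos hG1 hGm1 hu hGpos hGd1neg hGdm1pos
  have hKmul : ∀ u, (1 - u^2) * K u = G u := fun u => Kf_mul hG1 hGm1 u
  have hK1 : K 1 = -(Gd 1)/2 := Kf_one
  have hKm1 : K (-1) = Gd (-1)/2 := Kf_neg_one
  -- angle parametrization of the level curve
  set S : ℝ → ℝ := fun σ => μ - ρ * Real.cos σ with hSdef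
  have hSder : ∀ σ, HasDerivAt S (ρ * Real.sin σ) σ := by
    intro σ
    have : HasDerivAt (fun σ : ℝ => μ - ρ * Real.cos σ) (-(ρ * -Real.sin σ)) σ :=
      ((Real.hasDerivAt_cos σ).const_mul ρ).const_sub μ
    simpa using this
  have hcos_mem : ∀ σ : ℝ, Real.cos σ ∈ Icc (-1:ℝ) 1 :=
    fun σ => ⟨Real.neg_one_le_cos σ, Real.cos_le_one σ⟩
  set ψ : ℝ → ℝ := fun σ => exp (3*γ*S σ) * K (Real.cos σ) / ρ^2 with hψdef
  have hψpos : ∀ σ, 0 < ψ σ := by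
    intro σ
    have := hKpos _ (hcos_mem σ)
    have he := exp_pos (3*γ*S σ)
    rw [hψdef]
    positivity
  have hψdiff : ∀ σ, DifferentiableAt ℝ ψ σ := by
    intro σ
    rw [hψdef]
    apply DifferentiableAt.div_const
    apply DifferentiableAt.mul
    · apply DifferentiableAt.exp
      exact ((hSder σ).differentiableAt.const_mul (3*γ)).congr_of_eventuallyEq
        (Eventually.of_forall fun τ => rfl) |>.congr_of_eventuallyEq
        (Eventually.of_forall fun τ => rfl)
    · exact (hKdiff (Real.cos σ)).comp σ Real.differentiable_cos.differentiableAt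
  set p : ℝ → ℝ := fun σ => Real.sqrt (ψ σ) with hpdef
  have hppos : ∀ σ, 0 < p σ := fun σ => Real.sqrt_pos.mpr (hψpos σ)
  have hpsq : ∀ σ, p σ ^ 2 = ψ σ := fun σ => Real.sq_sqrt (le_of_lt (hψpos σ))
  have hpder : ∀ σ, HasDerivAt p (deriv p σ) σ := by
    intro σ
    apply DifferentiableAt.hasDerivAt
    rw [hpdef]
    exact ((hψdiff σ).hasDerivAt.sqrt (ne_of_gt (hψpos σ))).differentiableAt
  have hpcont : Continuous p := by
    rw [continuous_iff_continuousAt]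
    exact fun σ => (hpder σ).continuousAt
  have hSper : ∀ σ, S (σ + 2*π) = S σ := by
    intro σ; rw [hSdef]; simp [Real.cos_add_two_pi]
  have hψper : ∀ σ, ψ (σ + 2*π) = ψ σ := by
    intro σ; rw [hψdef]; simp only [hSper, Real.cos_add_two_pi]
  have hpper : ∀ σ, p (σ + 2*π) = p σ := by
    intro σ; simp only [hpdef]; rw [hψper]
  set X : ℝ → ℝ := fun σ => exp (S σ) with hXdef
  set Y : ℝ → ℝ := fun σ => -(ρ * Real.sin σ * p σ) with hYdef
  have hYper : ∀ σ, Y (σ + 2*π) = Y σ := by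
    intro σ; rw [hYdef]; simp only [Real.sin_add_two_pi, hpper]
  -- energy identity
  have hEI : ∀ σ, Y σ ^ 2 = exp (3*γ*S σ) * (E - gE γ b (S σ)) := by
    intro σ
    have h1 : Y σ ^ 2 = ρ^2 * (Real.sin σ)^2 * ψ σ := by
      rw [hYdef]; simp only []
      rw [← hpsq σ]; ring
    have h2 : (Real.sin σ)^2 = 1 - (Real.cos σ)^2 := by
      have := Real.sin_sq_add_cos_sq σ; linarith
    have h3 : G (Real.cos σ) = E - gE γ b (S σ) := by
      rw [hGdef, hSdef]
    rw [h1, h2, hψdef]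
    field_simp
    rw [← h3, ← hKmul (Real.cos σ)]
  -- the core algebraic identity relating gD to the vector field
  have hci : ∀ s : ℝ, exp (3*γ*s) * gD γ b s
      = 2*(b*(γ-1)*exp s^3 - (3*γ-2)/2*exp s^2) := by
    intro s
    have e2 : exp (3*γ*s) * exp (-(3*γ-2)*s) = exp s ^ 2 := by
      rw [← exp_add, show 3*γ*s + -(3*γ-2)*s = s + s by ring, exp_add, sq]
    have e3 : exp (3*γ*s) * exp (-(3*γ-3)*s) = exp s ^ 3 := by
      rw [← exp_add, show 3*γ*s + -(3*γ-3)*s = s + (s + s) by ring, exp_add, exp_add]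
      ring
    calc exp (3*γ*s) * gD γ b s
        = -(3*γ-2) * (exp (3*γ*s) * exp (-(3*γ-2)*s))
          + (3*γ-3) * (2*b/3) * (exp (3*γ*s) * exp (-(3*γ-3)*s)) := by unfold gD; ring
      _ = -(3*γ-2) * exp s ^ 2 + (3*γ-3) * (2*b/3) * exp s ^ 3 := by rw [e2, e3]
      _ = 2*(b*(γ-1)*exp s^3 - (3*γ-2)/2*exp s^2) := by ring
  -- derivative of Y
  set Yd : ℝ → ℝ := fun σ => -(ρ * (Real.cos σ * p σ + Real.sin σ * deriv p σ)) with hYddef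
  have hYder : ∀ σ, HasDerivAt Y (Yd σ) σ := by
    intro σ
    have h1 : HasDerivAt (fun σ => Real.sin σ * p σ)
        (Real.cos σ * p σ + Real.sin σ * deriv p σ) σ :=
      (Real.hasDerivAt_sin σ).mul (hpder σ)
    have h2 := (h1.const_mul ρ).neg
    have h3 : Y = fun σ => -(ρ * (Real.sin σ * p σ)) := by
      rw [hYdef]; funext τ; ring
    rw [h3, hYddef]
    exact h2
  -- the key pointwise identity
  have hKEY : ∀ σ, Yd σ * p σ
      = b*(γ-1)*X σ^3 - (3*γ-2)/2*X σ^2 - 3*γ/2*Y σ^2 := by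
    intro σ
    have hXpt : X σ = exp (S σ) := rfl
    have hYpt : Y σ = -(ρ * Real.sin σ * p σ) := rfl
    rcases eq_or_ne (Real.sin σ) 0 with hsin | hsin
    · -- turning points
      have hY0 : Y σ = 0 := by rw [hYpt, hsin]; ring
      have hYdpt : Yd σ * p σ = -(ρ * Real.cos σ) * ψ σ := by
        have : Yd σ = -(ρ * (Real.cos σ * p σ)) := by
          rw [hYddef]; simp only [hsin]; ring
        rw [this, ← hpsq σ]; ring
      have hcossq : (Real.cos σ - 1) * (Real.cos σ + 1) = 0 := by
        have := Real.sin_sq_add_cos_sq σ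
        nlinarith [hsin]
      rcases mul_eq_zero.mp hcossq with h | h
      · -- cos σ = 1 : the inner turning point s1
        have hcos : Real.cos σ = 1 := by linarith
        have hSσ : S σ = s1 := by
          show μ - ρ * Real.cos σ = s1
          rw [hcos]; exact hμρ1
        have hψσ : ψ σ = exp (3*γ*s1) * (-(ρ * gD γ b s1)/2) / ρ^2 := by
          show exp (3*γ*S σ) * K (Real.cos σ) / ρ^2 = _
          rw [hSσ, hcos, hK1]
          have : Gd 1 = ρ * gD γ b s1 := by
            show ρ * gD γ b (μ - ρ * 1) = _
            rw [hμρ1]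
          rw [this]
        rw [hYdpt, hψσ, hcos, hY0, hXpt, hSσ]
        have hL : -(ρ * 1) * (exp (3*γ*s1) * (-(ρ * gD γ b s1)/2) / ρ^2)
            = exp (3*γ*s1) * gD γ b s1 / 2 := by
          field_simp
        rw [hL]; linarith [hci s1]
      · -- cos σ = -1 : the outer turning point s2
        have hcos : Real.cos σ = -1 := by linarith
        have hSσ : S σ = s2 := by
          show μ - ρ * Real.cos σ = s2
          rw [hcos]; exact hμρm1
        have hψσ : ψ σ = exp (3*γ*s2) * ((ρ * gD γ b s2)/2) / ρ^2 := by
          show exp (3*γ*S σ) * K (Real.cos σ) / ρ^2 = _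
          rw [hSσ, hcos, hKm1]
          have : Gd (-1) = ρ * gD γ b s2 := by
            show ρ * gD γ b (μ - ρ * (-1)) = _
            rw [hμρm1]
          rw [this]
        rw [hYdpt, hψσ, hcos, hY0, hXpt, hSσ]
        have hL : -(ρ * (-1)) * (exp (3*γ*s2) * ((ρ * gD γ b s2)/2) / ρ^2)
            = exp (3*γ*s2) * gD γ b s2 / 2 := by
          field_simp
        rw [hL]; linarith [hci s2]
    · -- regular points : differentiate the energy identity
      have hY2 : HasDerivAt (fun σ => Y σ^2) (2*Y σ*Yd σ) σ := by
        have := (hYder σ).fun_pow 2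
        refine this.congr_deriv ?_
        ring
      have hA : HasDerivAt (fun σ => exp (3*γ*S σ))
          (exp (3*γ*S σ) * (3*γ*(ρ*Real.sin σ))) σ := by
        exact ((hSder σ).const_mul (3*γ)).exp
      have hgES : HasDerivAt (fun σ => gE γ b (S σ)) (gD γ b (S σ) * (ρ*Real.sin σ)) σ :=
        (hasDerivAt_gE γ b (S σ)).comp σ (hSder σ)
      have hRem : HasDerivAt (fun σ => E - gE γ b (S σ))
          (-(gD γ b (S σ) * (ρ*Real.sin σ))) σ := hgES.const_sub E
      have hprod := hA.mul hRem
      have hWder := hY2.sub hprod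
      have hW0 : (fun σ => Y σ^2 - exp (3*γ*S σ)*(E - gE γ b (S σ))) = fun _ => (0:ℝ) :=
        funext fun τ => by rw [hEI τ]; ring
      have hzero : HasDerivAt (fun σ => Y σ^2 - exp (3*γ*S σ)*(E - gE γ b (S σ))) 0 σ := by
        rw [hW0]; exact hasDerivAt_const σ 0
      have hEQ := hWder.unique hzero
      -- rearrange
      have h6 : 2*Y σ*Yd σ = ρ*Real.sin σ*
          (3*γ*(exp (3*γ*S σ) * (E - gE γ b (S σ))) - exp (3*γ*S σ) * gD γ b (S σ)) := by
        linear_combination hEQ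
      rw [← hEI σ, hci (S σ)] at h6
      rw [hYpt] at h6
      have hρs : ρ * Real.sin σ ≠ 0 := mul_ne_zero hρne hsin
      rw [hXpt, hYpt]
      have hfac : (-2:ℝ)*(ρ*Real.sin σ) ≠ 0 :=
        mul_ne_zero (by norm_num) hρs
      apply mul_left_cancel₀ hfac
      linear_combination h6
  -- time reparametrization
  have hpinv_cont : Continuous fun σ => (p σ)⁻¹ :=
    hpcont.inv₀ (fun σ => ne_of_gt (hppos σ))
  have hInt : ∀ u v : ℝ, IntervalIntegrable (fun σ => (p σ)⁻¹) MeasureTheory.volume u v :=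
    fun u v => hpinv_cont.intervalIntegrable u v
  set τ : ℝ → ℝ := fun φ => ∫ σ in (0:ℝ)..φ, (p σ)⁻¹ with hτdef
  have hτ_add : ∀ u v : ℝ, τ v = τ u + ∫ σ in u..v, (p σ)⁻¹ := by
    intro u v
    rw [hτdef]
    simp only []
    rw [← intervalIntegral.integral_add_adjacent_intervals (hInt 0 u) (hInt u v)]
  have hτ_mono : StrictMono τ := by
    intro u v huv
    have hpos : 0 < ∫ σ in u..v, (p σ)⁻¹ :=
      intervalIntegral.intervalIntegral_pos_of_pos (hInt u v)
        (fun σ => inv_pos.mpr (hppos σ)) huv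
    have := hτ_add u v
    linarith
  have hτder : ∀ u : ℝ, HasDerivAt τ ((p u)⁻¹) u := by
    intro u
    exact intervalIntegral.integral_hasDerivAt_right (hInt 0 u)
      (hpinv_cont.stronglyMeasurableAtFilter _ _) hpinv_cont.continuousAt
  have hτcont : Continuous τ := by
    rw [continuous_iff_continuousAt]
    exact fun u => (hτder u).continuousAt
  set T : ℝ := ∫ σ in (0:ℝ)..(2*π), (p σ)⁻¹ with hTdef
  have hTpos : 0 < T :=
    intervalIntegral.intervalIntegral_pos_of_pos (hInt 0 (2*π))
      (fun σ => inv_pos.mpr (hppos σ)) (by positivity)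
  have hpinv_per : Function.Periodic (fun σ => (p σ)⁻¹) (2*π) := by
    intro σ; simp only [hpper σ]
  have hτ_shift : ∀ u : ℝ, τ (u + 2*π) = τ u + T := by
    intro u
    rw [hτ_add u (u + 2*π), hpinv_per.intervalIntegral_add_eq u 0]
    rw [hTdef]
    norm_num
  have hτ_nat : ∀ n : ℕ, τ (2*π*n) = n*T ∧ τ (-(2*π*n)) = -(n*T) := by
    intro n
    induction n with
    | zero => simp [hτdef]
    | succ n ih =>
      constructor
      · have : 2*π*(n+1:ℕ) = 2*π*n + 2*π := by push_cast; ring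
        rw [this, hτ_shift, ih.1]; push_cast; ring
      · have h1 : -(2*π*(n+1:ℕ)) + 2*π = -(2*π*n) := by push_cast; ring
        have := hτ_shift (-(2*π*(n+1:ℕ)))
        rw [h1, ih.2] at this
        push_cast at this ⊢
        linarith
  have hτ_surj : Function.Surjective τ := by
    intro y
    obtain ⟨n, hn⟩ := exists_nat_ge (|y|/T)
    have hnT : |y| ≤ n*T := by
      rw [div_le_iff₀ hTpos] at hn
      linarith
    have h1 : τ (-(2*π*n)) ≤ y := by
      rw [(hτ_nat n).2]
      have := abs_le.mp (le_refl |y|)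
      have := neg_abs_le y
      linarith
    have h2 : y ≤ τ (2*π*n) := by
      rw [(hτ_nat n).1]
      have := le_abs_self y
      linarith
    have hle : -(2*π*(n:ℝ)) ≤ 2*π*(n:ℝ) := by
      have : (0:ℝ) ≤ 2*π*n := by positivity
      linarith
    obtain ⟨u, _, hu⟩ := intermediate_value_Icc hle (hτcont.continuousOn) ⟨h1, h2⟩
    exact ⟨u, hu⟩
  -- the inverse function
  set φiso := StrictMono.orderIsoOfSurjective τ hτ_mono hτ_surj with hφiso
  set φ : ℝ → ℝ := fun t => φiso.symm t with hφdef
  have hτφ : ∀ t, τ (φ t) = t := fun t =>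
    StrictMono.orderIsoOfSurjective_self_symm_apply τ hτ_mono hτ_surj t
  have hφτ : ∀ u, φ (τ u) = u := fun u =>
    StrictMono.orderIsoOfSurjective_symm_apply_self τ hτ_mono hτ_surj u
  have hφcont : Continuous φ := OrderIso.continuous φiso.symm
  have hφder : ∀ t, HasDerivAt φ (p (φ t)) t := by
    intro t
    have h := HasDerivAt.of_local_left_inverse (hφcont.continuousAt)
      (hτder (φ t)) (inv_ne_zero (ne_of_gt (hppos (φ t))))
      (Eventually.of_forall hτφ)
    rwa [inv_inv] at h
  have hφ_shift : ∀ t, φ (t + T) = φ t + 2*π := by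
    intro t
    apply hτ_mono.injective
    rw [hτφ, hτ_shift, hτφ]
  -- the solution
  refine ⟨fun t => X (φ t), fun t => Y (φ t), ?_, ?_, ?_, ?_, ?_⟩
  · -- x' = -(x*y)
    intro t
    have h1 := ((hSder (φ t)).comp t (hφder t)).exp
    convert h1 using 1
    show -(X (φ t) * Y (φ t)) = _
    rw [hXdef, hYdef]
    simp only [Function.comp_apply]
    ring
    rfl
  · -- y' equation
    intro t
    have h1 := (hYder (φ t)).comp t (hφder t)
    rw [hKEY (φ t)] at h1
    exact h1
  · -- positivity
    intro t
    exact exp_pos _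
  · -- nonconstant
    rintro ⟨c, hc⟩
    have hτ0 : τ 0 = 0 := by
      show (∫ σ in (0:ℝ)..(0:ℝ), (p σ)⁻¹) = 0
      exact intervalIntegral.integral_same
    have hφ0 : φ 0 = 0 := by nth_rewrite 1 [← hτ0]; exact hφτ 0
    have e1 : X (φ 0) = exp s1 := by
      rw [hφ0, hXdef]
      simp only [hSdef, Real.cos_zero]
      rw [hμρ1]
    have e2 : X (φ (τ π)) = exp s2 := by
      rw [hφτ, hXdef]
      simp only [hSdef, Real.cos_pi]
      rw [show μ - ρ * (-1) = s2 from hμρm1]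
    have hc1 := congrArg Prod.fst (hc 0)
    have hc2 := congrArg Prod.fst (hc (τ π))
    simp only [] at hc1 hc2
    rw [e1] at hc1
    rw [e2] at hc2
    have hee : exp s1 = exp s2 := by rw [hc1, hc2]
    have heq : s1 = s2 := Real.exp_eq_exp.mp hee
    linarith
  · -- periodicity
    refine ⟨T, hTpos, fun t => ⟨?_, ?_⟩⟩
    · show X (φ (t + T)) = X (φ t)
      rw [hφ_shift, hXdef]
      simp only [hSper]
    · show Y (φ (t + T)) = Y (φ t)
      rw [hφ_shift]
      exact hYper (φ t)




end PeriodicAux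
end PeriodicAux

/-- Theorem 2(iii), existence: for every `γ ∈ (1, 2]` and every `b > 0`, the
planar system possesses a nonconstant periodic solution in the half-plane `x > 0`. -/
theorem exists_periodic_solution
    (γ b : ℝ) (hγ : γ ∈ Set.Ioc (1 : ℝ) 2) (hb : 0 < b) :
    ∃ x y : ℝ → ℝ,
      (∀ t, HasDerivAt x (-(x t * y t)) t) ∧
      (∀ t, HasDerivAt y
        (b * (γ - 1) * x t ^ 3 - (3 * γ - 2) / 2 * x t ^ 2 - 3 * γ / 2 * y t ^ 2) t) ∧
      (∀ t, 0 < x t) ∧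
      (¬ ∃ c : ℝ × ℝ, ∀ t, (x t, y t) = c) ∧
      (∃ T > (0 : ℝ), ∀ t, x (t + T) = x t ∧ y (t + T) = y t) := by
  obtain ⟨E, s1, s2, hs1, hs2, _, hg1, hg2, hinner⟩ :=
    PeriodicAux.PeriodicAux.exists_levels hγ.1 hb
  exact PeriodicAux.PeriodicAux.core hγ.1 hb hs1 hs2 hg1 hg2 hinner
end

section
/- (Theorem 2(iii), basin) For every γ ∈ (1, 2] and every b > 0, every solution of the planar system whose initial condition lies in the set B = {(x, y) ∈ ℝ² : y² + x² - (2b/3)·x³ < 0 and x > 0} is periodic. Precisely: if x, y : ℝ → ℝ are differentiable functions satisfying x'(t) = -x(t)·y(t) and y'(t) = b(γ-1)·x(t)³ - ((3γ-2)/2)·x(t)² - (3γ/2)·y(t)² for all t, and x(0) > 0 and y(0)² + x(0)² - (2b/3)·x(0)³ < 0, then there exists T > 0 with x(t+T) = x(t) and y(t+T) = y(t) for all t. -/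
set_option maxHeartbeats 4000000
open Real Set Filter Topology

/-- Uniqueness for the planar system: two solutions agreeing at one time agree everywhere. -/
lemma planar_ode_unique (γ b : ℝ) (x y x2 y2 : ℝ → ℝ)
    (hx : ∀ t, HasDerivAt x (-(x t * y t)) t)
    (hy : ∀ t, HasDerivAt y
      (b * (γ - 1) * x t ^ 3 - (3 * γ - 2) / 2 * x t ^ 2 - 3 * γ / 2 * y t ^ 2) t)
    (hx2 : ∀ t, HasDerivAt x2 (-(x2 t * y2 t)) t)
    (hy2 : ∀ t, HasDerivAt y2
      (b * (γ - 1) * x2 t ^ 3 - (3 * γ - 2) / 2 * x2 t ^ 2 - 3 * γ / 2 * y2 t ^ 2) t)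
    (t1 : ℝ) (e1 : x2 t1 = x t1) (e2 : y2 t1 = y t1) :
    ∀ t, x2 t = x t ∧ y2 t = y t := by
  set V : ℝ × ℝ → ℝ × ℝ := fun p =>
    (-(p.1 * p.2), b * (γ - 1) * p.1 ^ 3 - (3 * γ - 2) / 2 * p.1 ^ 2 - 3 * γ / 2 * p.2 ^ 2)
    with hVdef
  have hV : ContDiff ℝ 1 V := by
    apply ContDiff.prodMk
    · exact (contDiff_fst.mul contDiff_snd).neg
    · exact (((contDiff_const.mul (contDiff_fst.pow 3))).sub
        (contDiff_const.mul (contDiff_fst.pow 2))).sub (contDiff_const.mul (contDiff_snd.pow 2))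
  set u : ℝ → ℝ × ℝ := fun t => (x t, y t) with hudef
  set u2 : ℝ → ℝ × ℝ := fun t => (x2 t, y2 t) with hu2def
  have hu : ∀ t, HasDerivAt u (V (u t)) t := fun t => (hx t).prodMk (hy t)
  have hu2 : ∀ t, HasDerivAt u2 (V (u2 t)) t := fun t => (hx2 t).prodMk (hy2 t)
  have hucont : Continuous u := continuous_prodMk.mpr
    ⟨continuous_iff_continuousAt.mpr fun t => (hx t).continuousAt,
     continuous_iff_continuousAt.mpr fun t => (hy t).continuousAt⟩
  have hu2cont : Continuous u2 := continuous_prodMk.mpr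
    ⟨continuous_iff_continuousAt.mpr fun t => (hx2 t).continuousAt,
     continuous_iff_continuousAt.mpr fun t => (hy2 t).continuousAt⟩
  have hS : {t : ℝ | u2 t = u t} = univ := by
    apply IsClopen.eq_univ
    · constructor
      · exact isClosed_eq hu2cont hucont
      · rw [isOpen_iff_mem_nhds]
        intro t0 ht0
        have ht0' : u2 t0 = u t0 := ht0
        have hsf : HasStrictFDerivAt V (fderiv ℝ V (u t0)) (u t0) :=
          (hV.contDiffAt).hasStrictFDerivAt one_ne_zero
        obtain ⟨K, s, hs, hlip⟩ := hsf.exists_lipschitzOnWith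
        have hmem : ∀ᶠ t in nhds t0, HasDerivAt u (V (u t)) t ∧ u t ∈ s := by
          filter_upwards [hucont.continuousAt (x := t0) (hs)] with t ht
          exact ⟨hu t, ht⟩
        have hmem2 : ∀ᶠ t in nhds t0, HasDerivAt u2 (V (u2 t)) t ∧ u2 t ∈ s := by
          have : u2 ⁻¹' s ∈ nhds t0 := hu2cont.continuousAt (x := t0) (ht0' ▸ hs)
          filter_upwards [this] with t ht
          exact ⟨hu2 t, ht⟩
        have := ODE_solution_unique_of_eventually (v := fun _ => V) (s := fun _ => s)
          (K := K) (Filter.Eventually.of_forall fun _ => hlip) hmem2 hmem ht0'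
        exact this.mono fun t h => h
    · exact ⟨t1, by simp only [mem_setOf_eq, hudef, hu2def, e1, e2]⟩
  intro t
  have : u2 t = u t := by
    have : t ∈ {t : ℝ | u2 t = u t} := hS ▸ mem_univ t
    exact this
  exact ⟨congrArg Prod.fst this, congrArg Prod.snd this⟩


/-- Theorem 2(iii), basin: for every `γ ∈ (1, 2]` and every `b > 0`, every
solution of the planar system whose initial condition lies in
`B = {(x,y) : y² + x² - (2b/3)x³ < 0, x > 0}` is periodic. -/
theorem basin_solutions_periodic
    (γ b : ℝ) (hγ : γ ∈ Set.Ioc (1 : ℝ) 2) (hb : 0 < b)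
    (x y : ℝ → ℝ)
    (hx : ∀ t, HasDerivAt x (-(x t * y t)) t)
    (hy : ∀ t, HasDerivAt y
      (b * (γ - 1) * x t ^ 3 - (3 * γ - 2) / 2 * x t ^ 2 - 3 * γ / 2 * y t ^ 2) t)
    (hx0 : 0 < x 0)
    (hB0 : y 0 ^ 2 + x 0 ^ 2 - 2 * b / 3 * x 0 ^ 3 < 0) :
    ∃ T > (0 : ℝ), ∀ t, x (t + T) = x t ∧ y (t + T) = y t := by
  obtain ⟨hγ1, hγ2⟩ := hγ
  have cx : Continuous x := continuous_iff_continuousAt.mpr fun t => (hx t).continuousAt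
  have cy : Continuous y := continuous_iff_continuousAt.mpr fun t => (hy t).continuousAt
  set I : ℝ → ℝ := fun t => ∫ s in (0:ℝ)..t, y s with hIdef
  have hI : ∀ t, HasDerivAt I (y t) t := fun t => (cy.integral_hasStrictDerivAt 0 t).hasDerivAt
  have cI : Continuous I := continuous_iff_continuousAt.mpr fun t => (hI t).continuousAt
  have hI0 : I 0 = 0 := intervalIntegral.integral_same
  -- exponential representation of x
  have hg0 : ∀ t, HasDerivAt (fun t => x t * exp (I t)) 0 t := by
    intro t
    have := (hx t).mul ((hI t).exp)
    exact this.congr_deriv (by ring)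
  have hgc : ∀ t, x t * exp (I t) = x 0 := by
    intro t
    have := is_const_of_deriv_eq_zero (fun t => (hg0 t).differentiableAt)
      (fun t => (hg0 t).deriv) t 0
    simpa [hI0] using this
  have hxI : ∀ t, x t = x 0 * exp (-I t) := by
    intro t
    rw [Real.exp_neg, ← hgc t]
    field_simp
  -- conserved quantity
  set F0 : ℝ := y 0 ^ 2 + x 0 ^ 2 - 2 * b / 3 * x 0 ^ 3 with hF0def
  have hF0 : F0 < 0 := hB0
  have hFd : ∀ t, HasDerivAt (fun t => y t ^ 2 + x t ^ 2 - 2 * b / 3 * x t ^ 3)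
      (2 * y t ^ 1 * (b * (γ - 1) * x t ^ 3 - (3 * γ - 2) / 2 * x t ^ 2 - 3 * γ / 2 * y t ^ 2)
        + 2 * x t ^ 1 * (-(x t * y t)) - 2 * b / 3 * (3 * x t ^ 2 * (-(x t * y t)))) t := by
    intro t
    exact (((hy t).pow 2).add ((hx t).pow 2)).sub (((hx t).pow 3).const_mul (2 * b / 3))
  have hGd : ∀ t, HasDerivAt
      (fun t => (y t ^ 2 + x t ^ 2 - 2 * b / 3 * x t ^ 3) * exp (3 * γ * I t)) 0 t := by
    intro t
    have := (hFd t).mul (((hI t).const_mul (3 * γ)).exp)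
    exact this.congr_deriv (by ring)
  have hFt : ∀ t, y t ^ 2 + x t ^ 2 - 2 * b / 3 * x t ^ 3 = F0 * exp (-(3 * γ) * I t) := by
    intro t
    have hc := is_const_of_deriv_eq_zero (fun t => (hGd t).differentiableAt)
      (fun t => (hGd t).deriv) t 0
    simp only [hI0, mul_zero, Real.exp_zero, mul_one] at hc
    have hne : exp (3 * γ * I t) ≠ 0 := Real.exp_ne_zero _
    have : exp (-(3 * γ) * I t) * exp (3 * γ * I t) = 1 := by
      rw [← Real.exp_add]; ring_nf; exact Real.exp_zero
    have h2 : (y t ^ 2 + x t ^ 2 - 2 * b / 3 * x t ^ 3)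
        = (y t ^ 2 + x t ^ 2 - 2 * b / 3 * x t ^ 3) * (exp (3 * γ * I t) * exp (-(3 * γ) * I t)) := by
      rw [← Real.exp_add, show 3 * γ * I t + -(3 * γ) * I t = 0 by ring, Real.exp_zero, mul_one]
    rw [h2, ← mul_assoc, hc, hF0def]
  -- the scalar potential function
  set α : ℝ := 2 - 3 * γ with hαdef
  have hα : α + 1 < 0 := by simp only [hαdef]; linarith
  have hαneg : α < 0 := by linarith
  set P : ℝ := x 0 ^ 2 with hPdef
  set Q : ℝ := 2 * b / 3 * x 0 ^ 3 with hQdef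
  have hP : 0 < P := by positivity
  have hQ : 0 < Q := by positivity
  set ψ : ℝ → ℝ := fun w => F0 * exp (α * w) + Q * exp (-w) - P with hψdef
  have cψ : Continuous ψ := by
    apply Continuous.sub
    · exact ((continuous_const.mul ((continuous_const.mul continuous_id).rexp)).add
        (continuous_const.mul (continuous_neg.rexp)))
    · exact continuous_const
  have hψd : ∀ w, HasDerivAt ψ (α * F0 * exp (α * w) - Q * exp (-w)) w := by
    intro w
    have h1 : HasDerivAt (fun w : ℝ => α * w) α w := by
      simpa using (hasDerivAt_id w).const_mul α
    have h2 : HasDerivAt (fun w : ℝ => -w) (-1 : ℝ) w := by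
      exact (hasDerivAt_id w).neg
    have := ((h1.exp.const_mul F0).add (h2.exp.const_mul Q)).sub (hasDerivAt_const w P)
    exact this.congr_deriv (by ring)
  -- key identity :  y t ^ 2 * exp (2 I t) = ψ (I t)
  have key : ∀ t, y t ^ 2 * exp (2 * I t) = ψ (I t) := by
    intro t
    have hFt' := hFt t
    rw [hxI t] at hFt'
    have e2 : exp (2 * I t) = exp (I t) ^ 2 := by
      rw [show (2 : ℝ) * I t = I t + I t by ring, Real.exp_add]; ring
    have eα : exp (α * I t) = exp (-(3 * γ) * I t) * exp (I t) ^ 2 := by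
      rw [← e2, ← Real.exp_add]; congr 1; simp only [hαdef]; ring
    have eneg : exp (-I t) = (exp (I t))⁻¹ := Real.exp_neg _
    simp only [hψdef, eα, eneg, e2, hPdef, hQdef]
    have hEne : exp (I t) ≠ 0 := Real.exp_ne_zero _
    have hEnegne : exp (-I t) ≠ 0 := Real.exp_ne_zero _
    rw [eneg] at hFt'
    field_simp at hFt' ⊢
    refine mul_left_cancel₀ (pow_ne_zero 2 hEne) ?_
    linear_combination exp (I t) ^ 2 * hFt'
  have hψI : ∀ t, 0 ≤ ψ (I t) := by
    intro t
    rw [← key t]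
    positivity
  -- upper and lower bounds for I
  set wB : ℝ := -Real.log (P / Q) with hwBdef
  have hIub : ∀ t, I t ≤ wB := by
    intro t
    have h1 := hψI t
    have h2 : F0 * exp (α * I t) ≤ 0 :=
      mul_nonpos_of_nonpos_of_nonneg hF0.le (Real.exp_pos _).le
    have h3 : P ≤ Q * exp (-I t) := by simp only [hψdef] at h1; nlinarith
    have h4 : P / Q ≤ exp (-I t) := by rw [div_le_iff₀ hQ]; nlinarith [Real.exp_pos (-I t)]
    have h5 : Real.log (P / Q) ≤ -I t := by
      calc Real.log (P / Q) ≤ Real.log (exp (-I t)) :=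
            Real.log_le_log (by positivity) h4
        _ = -I t := Real.log_exp _
    simp only [hwBdef]; linarith
  set wA : ℝ := Real.log (Q / (-F0)) / (α + 1) with hwAdef
  have hIlb : ∀ t, wA ≤ I t := by
    intro t
    have h1 := hψI t
    have h2 : (-F0) * exp (α * I t) ≤ Q * exp (-I t) := by
      simp only [hψdef] at h1; nlinarith
    have h3 : exp ((α + 1) * I t) ≤ Q / (-F0) := by
      rw [le_div_iff₀ (by linarith : (0:ℝ) < -F0)]
      have : exp ((α + 1) * I t) = exp (α * I t) * exp (I t) := by
        rw [← Real.exp_add]; congr 1; ring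
      rw [this]
      have he : exp (-I t) * exp (I t) = 1 := by
        rw [← Real.exp_add]; simp
      nlinarith [Real.exp_pos (I t), Real.exp_pos (-I t), Real.exp_pos (α * I t)]
    have h4 : (α + 1) * I t ≤ Real.log (Q / (-F0)) := by
      calc (α + 1) * I t = Real.log (exp ((α + 1) * I t)) := (Real.log_exp _).symm
        _ ≤ Real.log (Q / (-F0)) := Real.log_le_log (Real.exp_pos _) h3
    simp only [hwAdef]
    rw [div_le_iff_of_neg hα]
    linarith [h4, mul_comm (α + 1) (I t)]
  -- every forward ray contains a zero of y
  have cross : ∀ a : ℝ, ∃ t, a < t ∧ y t = 0 := by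
    intro a
    by_contra hcon
    push_neg at hcon
    have hsign : (∀ t, a < t → 0 < y t) ∨ (∀ t, a < t → y t < 0) := by
      rcases (hcon (a + 1) (by linarith)).lt_or_gt with hn | hp
      · right
        intro t ht
        rcases (hcon t ht).lt_or_gt with h | h
        · exact h
        · exfalso
          have h0 : (0 : ℝ) ∈ uIcc (y t) (y (a + 1)) := by
            rw [Set.mem_uIcc]; right; constructor <;> linarith
          obtain ⟨s, hs, hys⟩ := intermediate_value_uIcc cy.continuousOn h0
          have hsa : a < s := by
            rcases Set.mem_uIcc.mp hs with h' | h'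
            · linarith [h'.1]
            · linarith [h'.1]
          exact hcon s hsa hys
      · left
        intro t ht
        rcases (hcon t ht).lt_or_gt with h | h
        · exfalso
          have h0 : (0 : ℝ) ∈ uIcc (y t) (y (a + 1)) := by
            rw [Set.mem_uIcc]; left; constructor <;> linarith
          obtain ⟨s, hs, hys⟩ := intermediate_value_uIcc cy.continuousOn h0
          have hsa : a < s := by
            rcases Set.mem_uIcc.mp hs with h' | h'
            · linarith [h'.1]
            · linarith [h'.1]
          exact hcon s hsa hys
        · exact h
    rcases hsign with hpos | hneg
    · -- Case A : y > 0 on (a, ∞)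
      have hImono : StrictMonoOn I (Ici a) := by
        apply strictMonoOn_of_deriv_pos (convex_Ici a) cI.continuousOn
        intro t ht
        rw [interior_Ici] at ht
        rw [(hI t).deriv]
        exact hpos t ht
      set J : ℝ → ℝ := fun t => I (max t (a + 1)) with hJdef
      have hJmono : Monotone J := by
        intro s t hst
        exact hImono.monotoneOn (le_max_of_le_right (by linarith : a ≤ a + 1))
          (le_max_of_le_right (by linarith : a ≤ a + 1)) (max_le_max hst le_rfl)
      have hJbdd : BddAbove (Set.range J) := ⟨wB, by rintro _ ⟨t, rfl⟩; exact hIub _⟩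
      set L : ℝ := ⨆ t, J t with hLdef
      have hJL : Tendsto J atTop (𝓝 L) := tendsto_atTop_ciSup hJmono hJbdd
      have hIL : Tendsto I atTop (𝓝 L) := by
        apply hJL.congr'
        filter_upwards [eventually_ge_atTop (a + 1)] with t ht
        simp only [hJdef, max_eq_left ht]
      have hIltL : ∀ t, a < t → I t < L := by
        intro t ht
        have h1 : I t < I (max t (a + 1) + 1) := by
          apply hImono (mem_Ici.mpr ht.le)
            (mem_Ici.mpr (by linarith [le_max_right t (a + 1)]))
          linarith [le_max_left t (a + 1)]
        have h2 : I (max t (a + 1) + 1) = J (max t (a + 1) + 1) := by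
          simp only [hJdef]
          rw [max_eq_left (by linarith [le_max_right t (a + 1)] : a + 1 ≤ max t (a + 1) + 1)]
        calc I t < I (max t (a + 1) + 1) := h1
          _ = J (max t (a + 1) + 1) := h2
          _ ≤ L := le_ciSup hJbdd _
      have hψL : 0 ≤ ψ L :=
        ge_of_tendsto ((cψ.tendsto L).comp hIL) (Filter.Eventually.of_forall hψI)
      have hy2psi : ∀ t, y t ^ 2 = ψ (I t) * (exp (2 * I t))⁻¹ := by
        intro t
        rw [← key t]
        field_simp
      have hy2lim0 : Tendsto (fun t => y t ^ 2) atTop (𝓝 (ψ L * (exp (2 * L))⁻¹)) := by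
        have h1 : Tendsto (fun t => ψ (I t)) atTop (𝓝 (ψ L)) := (cψ.tendsto L).comp hIL
        have h2 : Tendsto (fun t => (exp (2 * I t))⁻¹) atTop (𝓝 ((exp (2 * L))⁻¹)) :=
          ((Real.continuous_exp.tendsto _).comp (hIL.const_mul 2)).inv₀ (Real.exp_ne_zero _)
        exact (h1.mul h2).congr fun t => (hy2psi t).symm
      rcases hψL.lt_or_eq with hψLpos | hψLeq
      · -- positive limit of y² : I grows linearly, contradiction with bound
        set μ : ℝ := ψ L * (exp (2 * L))⁻¹ with hμdef
        have hμpos : 0 < μ := mul_pos hψLpos (inv_pos.mpr (Real.exp_pos _))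
        have hev : ∀ᶠ t in atTop, μ / 2 < y t ^ 2 :=
          hy2lim0.eventually (eventually_gt_nhds (by linarith))
        obtain ⟨t0', ht0'⟩ := eventually_atTop.mp hev
        set t0 : ℝ := max t0' (a + 1) with ht0def
        set m : ℝ := Real.sqrt (μ / 2) with hmdef
        have hmpos : 0 < m := Real.sqrt_pos.mpr (by linarith)
        have hym : ∀ t, t0 ≤ t → m ≤ y t := by
          intro t ht
          have h1 : μ / 2 ≤ y t ^ 2 := (ht0' t (le_trans (le_max_left _ _) ht)).le
          have h2 : 0 < y t := hpos t (by
            have := le_max_right t0' (a + 1); linarith [ht])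
          calc m ≤ Real.sqrt (y t ^ 2) := Real.sqrt_le_sqrt h1
            _ = y t := by rw [Real.sqrt_sq h2.le]
        have hgrow : ∀ t, t0 ≤ t → I t0 + m * (t - t0) ≤ I t := by
          intro t ht
          have hmono2 : MonotoneOn (fun t => I t - m * t) (Ici t0) := by
            apply monotoneOn_of_deriv_nonneg (convex_Ici t0)
            · exact (cI.sub (continuous_const.mul continuous_id)).continuousOn
            · intro s _
              exact ((hI s).sub (by simpa using (hasDerivAt_id s).const_mul m)
                ).differentiableAt.differentiableWithinAt
            · intro s hs
              rw [interior_Ici] at hs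
              rw [show deriv (fun t => I t - m * t) s = y s - m from ((hI s).sub (by simpa using (hasDerivAt_id s).const_mul m)).deriv]
              linarith [hym s hs.le]
          have := hmono2 self_mem_Ici (mem_Ici.mpr ht) ht
          simp only at this
          nlinarith [this]
        have hfar : t0 ≤ t0 + (wB + 1 - I t0) / m := by
          have : 0 ≤ (wB + 1 - I t0) / m := div_nonneg (by linarith [hIub t0]) hmpos.le
          linarith
        have h3 : m * (t0 + (wB + 1 - I t0) / m - t0) = wB + 1 - I t0 := by
          field_simp
          ring
        linarith [hgrow _ hfar, hIub (t0 + (wB + 1 - I t0) / m), h3]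
      · -- ψ L = 0 : y' tends to a negative limit, contradiction
        have hαF0 : 0 < α * F0 := mul_pos_of_neg_of_neg hαneg hF0
        have hψLeq' : F0 * exp (α * L) + Q * exp (-L) - P = 0 := by
          simp only [hψdef] at hψLeq; linarith
        have hdneg : α * F0 * exp (α * L) - Q * exp (-L) < 0 := by
          by_contra hcon2
          push_neg at hcon2
          have hQle : Q ≤ α * F0 * exp ((α + 1) * L) := by
            have he : exp ((α + 1) * L) = exp (α * L) * exp L := by
              rw [← Real.exp_add]; congr 1; ring
            have he2 : exp (-L) * exp L = 1 := by rw [← Real.exp_add]; simp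
            nlinarith [Real.exp_pos L]
          have hmono2 : StrictMonoOn ψ (Iic L) := by
            apply strictMonoOn_of_deriv_pos (convex_Iic L) cψ.continuousOn
            intro w hw
            rw [interior_Iic] at hw
            rw [(hψd w).deriv]
            have h1 : exp ((α + 1) * L) < exp ((α + 1) * w) :=
              Real.exp_lt_exp.mpr (mul_lt_mul_of_neg_left hw hα)
            have h2 : Q < α * F0 * exp ((α + 1) * w) :=
              lt_of_le_of_lt hQle (by nlinarith)
            have he : exp (α * w) = exp ((α + 1) * w) * exp (-w) := by
              rw [← Real.exp_add]; congr 1; ring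
            rw [he]
            nlinarith [Real.exp_pos (-w)]
          have h3 : ψ (I (a + 1)) < ψ L :=
            hmono2 (mem_Iic.mpr (hIltL (a + 1) (by linarith)).le) self_mem_Iic
              (hIltL (a + 1) (by linarith))
          linarith [hψI (a + 1)]
        set X : ℝ := x 0 * exp (-L) with hXdef
        set δ : ℝ := b * (γ - 1) * X ^ 3 - (3 * γ - 2) / 2 * X ^ 2 with hδdef
        have h2δ : 2 * δ = (α * F0 * exp (α * L) - Q * exp (-L)) * exp (-L) ^ 2 := by
          simp only [hδdef, hXdef, hQdef, hPdef, hαdef] at hψLeq' ⊢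
          linear_combination (-(2 - 3 * γ) * exp (-L) ^ 2) * hψLeq'
        have hδneg : δ < 0 := by
          have hE2 : 0 < exp (-L) ^ 2 := pow_pos (Real.exp_pos _) 2
          nlinarith [mul_neg_of_neg_of_pos hdneg hE2]
        have hxlim : Tendsto x atTop (𝓝 X) := by
          have h1 : Tendsto (fun t => x 0 * exp (-I t)) atTop (𝓝 (x 0 * exp (-L))) :=
            ((Real.continuous_exp.tendsto _).comp hIL.neg).const_mul (x 0)
          exact h1.congr fun t => (hxI t).symm
        have hy2lim : Tendsto (fun t => y t ^ 2) atTop (𝓝 0) := by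
          have h0 : ψ L * (exp (2 * L))⁻¹ = 0 := by rw [← hψLeq, zero_mul]
          rw [h0] at hy2lim0
          exact hy2lim0
        have hy'lim : Tendsto
            (fun t => b * (γ - 1) * x t ^ 3 - (3 * γ - 2) / 2 * x t ^ 2 - 3 * γ / 2 * y t ^ 2)
            atTop (𝓝 δ) := by
          have h := (((hxlim.pow 3).const_mul (b * (γ - 1))).sub
            ((hxlim.pow 2).const_mul ((3 * γ - 2) / 2))).sub (hy2lim.const_mul (3 * γ / 2))
          simpa using h
        have hev : ∀ᶠ t in atTop,
            b * (γ - 1) * x t ^ 3 - (3 * γ - 2) / 2 * x t ^ 2 - 3 * γ / 2 * y t ^ 2 < δ / 2 :=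
          by
          have hhalf : δ < δ / 2 := by
            have h := hδneg
            clear_value δ
            linarith
          exact hy'lim.eventually (eventually_lt_nhds hhalf)
        obtain ⟨t0', ht0'⟩ := eventually_atTop.mp hev
        set t0 : ℝ := max t0' (a + 1) with ht0def
        have ht0a : a < t0 := by linarith [le_max_right t0' (a + 1)]
        have hanti : AntitoneOn (fun t => y t - δ / 2 * t) (Ici t0) := by
          apply antitoneOn_of_deriv_nonpos (convex_Ici t0)
          · exact (cy.sub (continuous_const.mul continuous_id)).continuousOn
          · intro s _
            exact ((hy s).sub (by simpa using (hasDerivAt_id s).const_mul (δ / 2))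
              ).differentiableAt.differentiableWithinAt
          · intro s hs
            rw [interior_Ici] at hs
            rw [show deriv (fun t => y t - δ / 2 * t) s = _ from ((hy s).sub (by simpa using (hasDerivAt_id s).const_mul (δ / 2))).deriv]
            linarith [ht0' s (le_trans (le_max_left _ _) hs.le)]
        have hyt0 : 0 < y t0 := hpos t0 ht0a
        set tc : ℝ := t0 + 2 * (y t0 + 1) / (-δ) with htcdef
        have htc : t0 ≤ tc := by
          have h0 : 0 ≤ 2 * (y t0 + 1) / (-δ) := div_nonneg (by linarith) (by linarith)
          rw [htcdef]
          linarith
        have h4 := hanti self_mem_Ici (mem_Ici.mpr htc) htc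
        simp only at h4
        have hδne : δ ≠ 0 := ne_of_lt hδneg
        have h5 : δ / 2 * (tc - t0) = -(y t0 + 1) := by
          simp only [htcdef]
          field_simp
          ring
        have h6 : 0 < y tc := hpos tc (by linarith)
        nlinarith [h4, h5]
    · -- Case B : y < 0 on (a, ∞)
      have hIanti : StrictAntiOn I (Ici a) := by
        apply strictAntiOn_of_deriv_neg (convex_Ici a) cI.continuousOn
        intro t ht
        rw [interior_Ici] at ht
        rw [(hI t).deriv]
        exact hneg t ht
      set J : ℝ → ℝ := fun t => I (max t (a + 1)) with hJdef
      have hJanti : Antitone J := by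
        intro s t hst
        exact hIanti.antitoneOn (le_max_of_le_right (by linarith : a ≤ a + 1))
          (le_max_of_le_right (by linarith : a ≤ a + 1)) (max_le_max hst le_rfl)
      have hJbdd : BddBelow (Set.range J) := ⟨wA, by rintro _ ⟨t, rfl⟩; exact hIlb _⟩
      set L : ℝ := ⨅ t, J t with hLdef
      have hJL : Tendsto J atTop (𝓝 L) := tendsto_atTop_ciInf hJanti hJbdd
      have hIL : Tendsto I atTop (𝓝 L) := by
        apply hJL.congr'
        filter_upwards [eventually_ge_atTop (a + 1)] with t ht
        simp only [hJdef, max_eq_left ht]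
      have hIgtL : ∀ t, a < t → L < I t := by
        intro t ht
        have h1 : I (max t (a + 1) + 1) < I t := by
          apply hIanti (mem_Ici.mpr ht.le)
            (mem_Ici.mpr (by linarith [le_max_right t (a + 1)]))
          linarith [le_max_left t (a + 1)]
        have h2 : I (max t (a + 1) + 1) = J (max t (a + 1) + 1) := by
          simp only [hJdef]
          rw [max_eq_left (by linarith [le_max_right t (a + 1)] : a + 1 ≤ max t (a + 1) + 1)]
        calc L ≤ J (max t (a + 1) + 1) := ciInf_le hJbdd _
          _ = I (max t (a + 1) + 1) := h2.symm
          _ < I t := h1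
      have hψL : 0 ≤ ψ L :=
        ge_of_tendsto ((cψ.tendsto L).comp hIL) (Filter.Eventually.of_forall hψI)
      have hy2psi : ∀ t, y t ^ 2 = ψ (I t) * (exp (2 * I t))⁻¹ := by
        intro t
        rw [← key t]
        field_simp
      have hy2lim0 : Tendsto (fun t => y t ^ 2) atTop (𝓝 (ψ L * (exp (2 * L))⁻¹)) := by
        have h1 : Tendsto (fun t => ψ (I t)) atTop (𝓝 (ψ L)) := (cψ.tendsto L).comp hIL
        have h2 : Tendsto (fun t => (exp (2 * I t))⁻¹) atTop (𝓝 ((exp (2 * L))⁻¹)) :=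
          ((Real.continuous_exp.tendsto _).comp (hIL.const_mul 2)).inv₀ (Real.exp_ne_zero _)
        exact (h1.mul h2).congr fun t => (hy2psi t).symm
      rcases hψL.lt_or_eq with hψLpos | hψLeq
      · -- positive limit of y² : I decreases linearly, contradiction with bound
        set μ : ℝ := ψ L * (exp (2 * L))⁻¹ with hμdef
        have hμpos : 0 < μ := mul_pos hψLpos (inv_pos.mpr (Real.exp_pos _))
        have hev : ∀ᶠ t in atTop, μ / 2 < y t ^ 2 :=
          hy2lim0.eventually (eventually_gt_nhds (by linarith))
        obtain ⟨t0', ht0'⟩ := eventually_atTop.mp hev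
        set t0 : ℝ := max t0' (a + 1) with ht0def
        set m : ℝ := Real.sqrt (μ / 2) with hmdef
        have hmpos : 0 < m := Real.sqrt_pos.mpr (by linarith)
        have hym : ∀ t, t0 ≤ t → y t ≤ -m := by
          intro t ht
          have h1 : μ / 2 ≤ y t ^ 2 := (ht0' t (le_trans (le_max_left _ _) ht)).le
          have h2 : y t < 0 := hneg t (by
            have := le_max_right t0' (a + 1); linarith [ht])
          have h3 : m ≤ -y t := by
            calc m ≤ Real.sqrt (y t ^ 2) := Real.sqrt_le_sqrt h1
              _ = |y t| := Real.sqrt_sq_eq_abs _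
              _ = -y t := abs_of_neg h2
          linarith
        have hdecay : ∀ t, t0 ≤ t → I t ≤ I t0 - m * (t - t0) := by
          intro t ht
          have hanti2 : AntitoneOn (fun t => I t + m * t) (Ici t0) := by
            apply antitoneOn_of_deriv_nonpos (convex_Ici t0)
            · exact (cI.add (continuous_const.mul continuous_id)).continuousOn
            · intro s _
              exact ((hI s).add (by simpa using (hasDerivAt_id s).const_mul m)
                ).differentiableAt.differentiableWithinAt
            · intro s hs
              rw [interior_Ici] at hs
              rw [show deriv (fun t => I t + m * t) s = y s + m from ((hI s).add (by simpa using (hasDerivAt_id s).const_mul m)).deriv]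
              linarith [hym s hs.le]
          have := hanti2 self_mem_Ici (mem_Ici.mpr ht) ht
          simp only at this
          nlinarith [this]
        have hfar : t0 ≤ t0 + (I t0 - wA + 1) / m := by
          have : 0 ≤ (I t0 - wA + 1) / m := div_nonneg (by linarith [hIlb t0]) hmpos.le
          linarith
        have h3 : m * (t0 + (I t0 - wA + 1) / m - t0) = I t0 - wA + 1 := by
          field_simp
          ring
        linarith [hdecay _ hfar, hIlb (t0 + (I t0 - wA + 1) / m), h3]
      · -- ψ L = 0 : y' tends to a positive limit, contradiction
        have hαF0 : 0 < α * F0 := mul_pos_of_neg_of_neg hαneg hF0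
        have hψLeq' : F0 * exp (α * L) + Q * exp (-L) - P = 0 := by
          simp only [hψdef] at hψLeq; linarith
        have hdpos : 0 < α * F0 * exp (α * L) - Q * exp (-L) := by
          by_contra hcon2
          push_neg at hcon2
          have hQge : α * F0 * exp ((α + 1) * L) ≤ Q := by
            have he : exp ((α + 1) * L) = exp (α * L) * exp L := by
              rw [← Real.exp_add]; congr 1; ring
            have he2 : exp (-L) * exp L = 1 := by rw [← Real.exp_add]; simp
            nlinarith [Real.exp_pos L]
          have hanti3 : StrictAntiOn ψ (Ici L) := by
            apply strictAntiOn_of_deriv_neg (convex_Ici L) cψ.continuousOn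
            intro w hw
            rw [interior_Ici] at hw
            rw [(hψd w).deriv]
            have h1 : exp ((α + 1) * w) < exp ((α + 1) * L) :=
              Real.exp_lt_exp.mpr (mul_lt_mul_of_neg_left hw hα)
            have h2 : α * F0 * exp ((α + 1) * w) < Q :=
              lt_of_lt_of_le (by nlinarith) hQge
            have he : exp (α * w) = exp ((α + 1) * w) * exp (-w) := by
              rw [← Real.exp_add]; congr 1; ring
            rw [he]
            nlinarith [Real.exp_pos (-w)]
          have h3 : ψ (I (a + 1)) < ψ L :=
            hanti3 self_mem_Ici (mem_Ici.mpr (hIgtL (a + 1) (by linarith)).le)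
              (hIgtL (a + 1) (by linarith))
          linarith [hψI (a + 1)]
        set X : ℝ := x 0 * exp (-L) with hXdef
        set δ : ℝ := b * (γ - 1) * X ^ 3 - (3 * γ - 2) / 2 * X ^ 2 with hδdef
        have h2δ : 2 * δ = (α * F0 * exp (α * L) - Q * exp (-L)) * exp (-L) ^ 2 := by
          simp only [hδdef, hXdef, hQdef, hPdef, hαdef] at hψLeq' ⊢
          linear_combination (-(2 - 3 * γ) * exp (-L) ^ 2) * hψLeq'
        have hδpos : 0 < δ := by
          have hE2 : 0 < exp (-L) ^ 2 := pow_pos (Real.exp_pos _) 2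
          nlinarith [mul_pos hdpos hE2]
        have hxlim : Tendsto x atTop (𝓝 X) := by
          have h1 : Tendsto (fun t => x 0 * exp (-I t)) atTop (𝓝 (x 0 * exp (-L))) :=
            ((Real.continuous_exp.tendsto _).comp hIL.neg).const_mul (x 0)
          exact h1.congr fun t => (hxI t).symm
        have hy2lim : Tendsto (fun t => y t ^ 2) atTop (𝓝 0) := by
          have h0 : ψ L * (exp (2 * L))⁻¹ = 0 := by rw [← hψLeq, zero_mul]
          rw [h0] at hy2lim0
          exact hy2lim0
        have hy'lim : Tendsto
            (fun t => b * (γ - 1) * x t ^ 3 - (3 * γ - 2) / 2 * x t ^ 2 - 3 * γ / 2 * y t ^ 2)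
            atTop (𝓝 δ) := by
          have h := (((hxlim.pow 3).const_mul (b * (γ - 1))).sub
            ((hxlim.pow 2).const_mul ((3 * γ - 2) / 2))).sub (hy2lim.const_mul (3 * γ / 2))
          simpa using h
        have hev : ∀ᶠ t in atTop,
            δ / 2 < b * (γ - 1) * x t ^ 3 - (3 * γ - 2) / 2 * x t ^ 2 - 3 * γ / 2 * y t ^ 2 := by
          have hhalf : δ / 2 < δ := by
            have h := hδpos
            clear_value δ
            linarith
          exact hy'lim.eventually (eventually_gt_nhds hhalf)
        obtain ⟨t0', ht0'⟩ := eventually_atTop.mp hev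
        set t0 : ℝ := max t0' (a + 1) with ht0def
        have ht0a : a < t0 := by linarith [le_max_right t0' (a + 1)]
        have hmono3 : MonotoneOn (fun t => y t - δ / 2 * t) (Ici t0) := by
          apply monotoneOn_of_deriv_nonneg (convex_Ici t0)
          · exact (cy.sub (continuous_const.mul continuous_id)).continuousOn
          · intro s _
            exact ((hy s).sub (by simpa using (hasDerivAt_id s).const_mul (δ / 2))
              ).differentiableAt.differentiableWithinAt
          · intro s hs
            rw [interior_Ici] at hs
            rw [show deriv (fun t => y t - δ / 2 * t) s = _ from ((hy s).sub (by simpa using (hasDerivAt_id s).const_mul (δ / 2))).deriv]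
            linarith [ht0' s (le_trans (le_max_left _ _) hs.le)]
        have hyt0 : y t0 < 0 := hneg t0 ht0a
        set tc : ℝ := t0 + 2 * (1 - y t0) / δ with htcdef
        have htc : t0 ≤ tc := by
          have h0 : 0 ≤ 2 * (1 - y t0) / δ := div_nonneg (by linarith) (by linarith)
          rw [htcdef]
          linarith
        have h4 := hmono3 self_mem_Ici (mem_Ici.mpr htc) htc
        simp only at h4
        have hδne : δ ≠ 0 := ne_of_gt hδpos
        have h5 : δ / 2 * (tc - t0) = 1 - y t0 := by
          simp only [htcdef]
          field_simp
          ring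
        have h6 : y tc < 0 := hneg tc (by linarith)
        have h7 : δ / 2 * tc - δ / 2 * t0 = δ / 2 * (tc - t0) := by ring
        clear_value tc t0 δ X L J
        linarith [h4, h5, h7]
  -- two successive zeros of y, and time-reversal symmetry
  obtain ⟨t1, ht1pos, ht1⟩ := cross 0
  obtain ⟨t2, ht2gt, ht2⟩ := cross t1
  have hrefl : ∀ s, y s = 0 → ∀ t, x (2 * s - t) = x t ∧ y (2 * s - t) = -y t := by
    intro s hs t
    have hlin : ∀ t : ℝ, HasDerivAt (fun t : ℝ => 2 * s - t) (-1 : ℝ) t := fun t => by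
      simpa using (hasDerivAt_id t).const_sub (2 * s)
    have hx2 : ∀ t, HasDerivAt (fun t => x (2 * s - t))
        (-((fun t => x (2 * s - t)) t * (fun t => -y (2 * s - t)) t)) t := by
      intro t
      have h := (hx (2 * s - t)).comp t (hlin t)
      exact h.congr_deriv (by beta_reduce; ring)
    have hy2 : ∀ t, HasDerivAt (fun t => -y (2 * s - t))
        (b * (γ - 1) * ((fun t => x (2 * s - t)) t) ^ 3
          - (3 * γ - 2) / 2 * ((fun t => x (2 * s - t)) t) ^ 2
          - 3 * γ / 2 * ((fun t => -y (2 * s - t)) t) ^ 2) t := by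
      intro t
      have h := ((hy (2 * s - t)).comp t (hlin t)).neg
      exact h.congr_deriv (by beta_reduce; ring)
    have h := planar_ode_unique γ b x y _ _ hx hy hx2 hy2 s
      (by show x (2 * s - s) = x s; rw [show 2 * s - s = s by ring])
      (by show -y (2 * s - s) = y s; rw [show 2 * s - s = s by ring, hs, neg_zero]) t
    refine ⟨h.1, ?_⟩
    have h2 : -y (2 * s - t) = y t := h.2
    rw [← h2, neg_neg]
  refine ⟨2 * (t2 - t1), by linarith, fun t => ?_⟩
  obtain ⟨hxa, hya⟩ := hrefl t1 ht1 t
  obtain ⟨hxb, hyb⟩ := hrefl t2 ht2 (2 * t1 - t)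
  have harg : 2 * t2 - (2 * t1 - t) = t + 2 * (t2 - t1) := by ring
  constructor
  · rw [← harg, hxb, hxa]
  · rw [← harg, hyb, hya]
    ring
end

section
/- (Theorem 2(iii), basin converse) For every γ ∈ (1, 2] and every b > 0, every nonconstant periodic solution of the planar system lying in the half-plane x > 0 is entirely contained in the set B = {(x, y) ∈ ℝ² : y² + x² - (2b/3)·x³ < 0 and x > 0}. Precisely: if x, y : ℝ → ℝ are differentiable functions satisfying x'(t) = -x(t)·y(t) and y'(t) = b(γ-1)·x(t)³ - ((3γ-2)/2)·x(t)² - (3γ/2)·y(t)² for all t, with x(t) > 0 for all t, (x, y) nonconstant, and x(t+T) = x(t), y(t+T) = y(t) for all t for some T > 0, then y(t)² + x(t)² - (2b/3)·x(t)³ < 0 for all t. -/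
open Set Filter Topology

/-- Theorem 2(iii), basin converse: for every `γ ∈ (1, 2]` and every `b > 0`,
every nonconstant periodic solution of the planar system lying in the half-plane
`x > 0` is entirely contained in `B = {(x,y) : y² + x² - (2b/3)x³ < 0, x > 0}`. -/
theorem periodic_solution_in_basin
    (γ b : ℝ) (hγ : γ ∈ Set.Ioc (1 : ℝ) 2) (hb : 0 < b)
    (x y : ℝ → ℝ)
    (hx : ∀ t, HasDerivAt x (-(x t * y t)) t)
    (hy : ∀ t, HasDerivAt y
      (b * (γ - 1) * x t ^ 3 - (3 * γ - 2) / 2 * x t ^ 2 - 3 * γ / 2 * y t ^ 2) t)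
    (hxpos : ∀ t, 0 < x t)
    (hnonconst : ¬ ∃ c : ℝ × ℝ, ∀ t, (x t, y t) = c)
    (T : ℝ) (hT : 0 < T)
    (hper : ∀ t, x (t + T) = x t ∧ y (t + T) = y t) :
    ∀ t, y t ^ 2 + x t ^ 2 - 2 * b / 3 * x t ^ 3 < 0 := by
  obtain ⟨hγ1, hγ2⟩ := hγ
  have hxd : Differentiable ℝ x := fun t => (hx t).differentiableAt
  have hyd : Differentiable ℝ y := fun t => (hy t).differentiableAt
  have hxc : Continuous x := hxd.continuous
  have hyc : Continuous y := hyd.continuous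
  have hxper : Function.Periodic x T := fun t => (hper t).1
  -- global maximum of x
  obtain ⟨t₀, ht₀mem, ht₀max⟩ :=
    isCompact_Icc.exists_isMaxOn (nonempty_Icc.mpr hT.le) hxc.continuousOn
  have hmax : ∀ t, x t ≤ x t₀ := by
    intro t
    obtain ⟨s, hs, hts⟩ := hxper.exists_mem_Ico₀ hT t
    rw [hts]
    exact ht₀max (Ico_subset_Icc_self hs)
  have hMpos : 0 < x t₀ := hxpos t₀
  -- derivative of x vanishes at the max, so y t₀ = 0
  have hloc : IsLocalMax x t₀ := by
    apply IsMaxOn.isLocalMax (s := univ) _ univ_mem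
    intro s _
    exact hmax s
  have hy0 : y t₀ = 0 := by
    have h0 := hloc.hasDerivAt_eq_zero (hx t₀)
    have := hMpos
    nlinarith [hMpos]
  -- the derivative of y at t₀ is nonnegative
  have hD : 0 ≤ b * (γ - 1) * x t₀ ^ 3 - (3 * γ - 2) / 2 * x t₀ ^ 2
      - 3 * γ / 2 * y t₀ ^ 2 := by
    by_contra h
    push_neg at h
    have hslope : Tendsto (slope y t₀) (𝓝[≠] t₀)
        (𝓝 (b * (γ - 1) * x t₀ ^ 3 - (3 * γ - 2) / 2 * x t₀ ^ 2
          - 3 * γ / 2 * y t₀ ^ 2)) :=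
      hasDerivAt_iff_tendsto_slope.mp (hy t₀)
    have h1 : ∀ᶠ t in 𝓝[≠] t₀, slope y t₀ t < 0 := hslope.eventually (gt_mem_nhds h)
    have h2 : ∀ᶠ t in 𝓝[<] t₀, slope y t₀ t < 0 :=
      h1.filter_mono (nhdsWithin_mono t₀ (fun s hs => ne_of_lt hs))
    rw [eventually_iff, mem_nhdsLT_iff_exists_Ioo_subset] at h2
    obtain ⟨a, ha, hsub⟩ := h2
    have hypos : ∀ t ∈ Ioo a t₀, 0 < y t := by
      intro t ht
      have hs : slope y t₀ t < 0 := hsub ht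
      rw [slope_def_field, hy0] at hs
      have htlt : t - t₀ < 0 := by
        have := ht.2; linarith
      rcases div_neg_iff.mp hs with ⟨h3, h4⟩ | ⟨h3, h4⟩
      · linarith
      · linarith
    have hanti : StrictAntiOn x (Icc a t₀) := by
      apply strictAntiOn_of_deriv_neg (convex_Icc a t₀) hxc.continuousOn
      intro t ht
      rw [interior_Icc] at ht
      rw [(hx t).deriv]
      have h5 := hypos t ht
      nlinarith [hxpos t]
    have halt : a < t₀ := ha
    have hm1 : (a + t₀) / 2 ∈ Icc a t₀ := ⟨by linarith, by linarith⟩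
    have hm2 : t₀ ∈ Icc a t₀ := ⟨halt.le, le_refl _⟩
    have := hanti hm1 hm2 (by linarith)
    exact absurd (hmax ((a + t₀) / 2)) (not_le.mpr this)
  -- hence V t₀ < 0
  have hVt₀ : y t₀ ^ 2 + x t₀ ^ 2 - 2 * b / 3 * x t₀ ^ 3 < 0 := by
    rw [hy0] at hD ⊢
    nlinarith [hMpos, mul_pos hb hMpos, sq_nonneg (x t₀), hγ1]
  -- conserved quantity: V(t) * exp(3γ ∫ y) is constant
  set Y : ℝ → ℝ := fun t => ∫ s in t₀..t, y s with hYdef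
  have hY : ∀ t, HasDerivAt Y (y t) t := fun t =>
    intervalIntegral.integral_hasDerivAt_right (hyc.intervalIntegrable _ _)
      (hyc.stronglyMeasurableAtFilter _ _) hyc.continuousAt
  set W : ℝ → ℝ := fun t =>
    (y t ^ 2 + x t ^ 2 - 2 * b / 3 * x t ^ 3) * Real.exp (3 * γ * Y t) with hWdef
  have hW : ∀ t, HasDerivAt W 0 t := by
    intro t
    have hV : HasDerivAt (fun t => y t ^ 2 + x t ^ 2 - 2 * b / 3 * x t ^ 3)
        ((2 * y t ^ 1) * (b * (γ - 1) * x t ^ 3 - (3 * γ - 2) / 2 * x t ^ 2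
          - 3 * γ / 2 * y t ^ 2)
          + (2 * x t ^ 1) * (-(x t * y t))
          - 2 * b / 3 * ((3 * x t ^ 2) * (-(x t * y t)))) t := by
      exact (((hy t).pow 2).add ((hx t).pow 2)).sub
        (((hx t).pow 3).const_mul (2 * b / 3))
    have hE : HasDerivAt (fun t => Real.exp (3 * γ * Y t))
        (Real.exp (3 * γ * Y t) * (3 * γ * y t)) t := ((hY t).const_mul (3 * γ)).exp
    have := hV.fun_mul hE
    convert this using 1
    · rfl
    · rfl
    ring
  have hWc : ∀ t, W t = W t₀ := fun t =>
    is_const_of_deriv_eq_zero (fun s => (hW s).differentiableAt)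
      (fun s => (hW s).deriv) t t₀
  intro t
  have hWt : W t = W t₀ := hWc t
  have hYt₀ : Y t₀ = 0 := intervalIntegral.integral_same
  have hWt₀neg : W t₀ < 0 := by
    rw [hWdef]
    simp only [hYt₀, mul_zero, Real.exp_zero, mul_one]
    exact hVt₀
  have hWtneg : W t < 0 := hWt ▸ hWt₀neg
  by_contra hcon
  push_neg at hcon
  have : 0 ≤ W t := mul_nonneg hcon (Real.exp_pos _).le
  linarith
end

section
/- (Theorem 1) The equilibrium point S = (u, y, ρ, H) = (0, 0, 0, 1/2) of the Einstein-frame system u' = -u·y, y' = -u + u² - 3H·y, ρ' = -3γ·ρ·H, H' = (1/4)(1-u)² - (1/2)y² - ((3γ-2)/6)ρ - H² is Lyapunov unstable for every γ ∈ [0, 2]. Precisely: there exists ε > 0 such that for every δ > 0 there exist a point p₀ ∈ ℝ⁴ with ‖p₀ - (0,0,0,1/2)‖ < δ, a time T > 0, and a differentiable function p = (u, y, ρ, H) : [0, T] → ℝ⁴ solving the above system on [0, T] with p(0) = p₀, such that ‖p(T) - (0,0,0,1/2)‖ > ε. -/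
open Set Filter Topology

/-! Auxiliary clamping function -/

noncomputable def clmp (lo hi x : ℝ) : ℝ := max lo (min x hi)

lemma clmp_eq {lo hi x : ℝ} (h1 : lo ≤ x) (h2 : x ≤ hi) : clmp lo hi x = x := by
  simp [clmp, min_eq_left h2, max_eq_right h1]

lemma clmp_mem {lo hi : ℝ} (h : lo ≤ hi) (x : ℝ) :
    lo ≤ clmp lo hi x ∧ clmp lo hi x ≤ hi := by
  constructor
  · exact le_max_left _ _
  · exact max_le h (min_le_right _ _)

lemma clmp_lipschitz (lo hi : ℝ) : LipschitzWith 1 (clmp lo hi) := by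
  have h1 : LipschitzWith 1 (fun x : ℝ => min x hi) := LipschitzWith.id.min_const hi
  have h2 := h1.max_const lo
  have hc : clmp lo hi = fun x => max (min x hi) lo := by
    funext x; simp [clmp, max_comm]
  rw [hc]; exact h2

lemma clmp_dist (lo hi x y : ℝ) : |clmp lo hi x - clmp lo hi y| ≤ |x - y| := by
  have := (clmp_lipschitz lo hi).dist_le_mul x y
  simpa [Real.dist_eq] using this

/-! The (clamped) vector field for the Einstein-frame system with `ρ = 0`,
on coordinates `(u, y, H)`. -/

noncomputable def vf : ℝ × ℝ × ℝ → ℝ × ℝ × ℝ := fun p =>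
  (-(clmp 0 (1/10) p.1 * clmp (-(1/10)) 0 p.2.1),
   -(clmp 0 (1/10) p.1) + (clmp 0 (1/10) p.1)^2
      - 3 * clmp (2/5) (3/5) p.2.2 * clmp (-(1/10)) 0 p.2.1,
   (1 - clmp 0 (1/10) p.1)^2/4 - (clmp (-(1/10)) 0 p.2.1)^2/2
      - (clmp (2/5) (3/5) p.2.2)^2)

lemma vf_eq {p : ℝ × ℝ × ℝ} (h1 : 0 ≤ p.1) (h2 : p.1 ≤ 1/10)
    (h3 : -(1/10) ≤ p.2.1) (h4 : p.2.1 ≤ 0) (h5 : 2/5 ≤ p.2.2) (h6 : p.2.2 ≤ 3/5) :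
    vf p = (-(p.1 * p.2.1),
            -p.1 + p.1^2 - 3 * p.2.2 * p.2.1,
            (1 - p.1)^2/4 - p.2.1^2/2 - p.2.2^2) := by
  unfold vf
  rw [clmp_eq h1 h2, clmp_eq h3 h4, clmp_eq h5 h6]

lemma vf_fst_nonneg (p : ℝ × ℝ × ℝ) : 0 ≤ (vf p).1 := by
  have ha := clmp_mem (by norm_num : (0:ℝ) ≤ 1/10) p.1
  have hb := clmp_mem (by norm_num : (-(1/10):ℝ) ≤ 0) p.2.1
  have : clmp 0 (1/10) p.1 * clmp (-(1/10)) 0 p.2.1 ≤ 0 :=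
    mul_nonpos_of_nonneg_of_nonpos ha.1 hb.2
  simpa [vf] using this

lemma vf_bound (p : ℝ × ℝ × ℝ) : ‖vf p‖ ≤ 1 := by
  have ha := clmp_mem (by norm_num : (0:ℝ) ≤ 1/10) p.1
  have hb := clmp_mem (by norm_num : (-(1/10):ℝ) ≤ 0) p.2.1
  have hc := clmp_mem (by norm_num : (2/5:ℝ) ≤ 3/5) p.2.2
  set a := clmp 0 (1/10) p.1
  set b := clmp (-(1/10)) 0 p.2.1
  set c := clmp (2/5) (3/5) p.2.2
  obtain ⟨ha1, ha2⟩ := ha; obtain ⟨hb1, hb2⟩ := hb; obtain ⟨hc1, hc2⟩ := hc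
  simp only [vf, Prod.norm_def]
  refine max_le ?_ (max_le ?_ ?_) <;> rw [Real.norm_eq_abs, abs_le] <;>
    constructor <;> nlinarith

lemma mul_abs_le {x y m D : ℝ} (hm : |x| ≤ m) (hy : |y| ≤ D) :
    -(m*D) ≤ x*y ∧ x*y ≤ m*D := by
  refine abs_le.1 ?_
  calc |x*y| = |x| * |y| := abs_mul _ _
    _ ≤ m*D := mul_le_mul hm hy (abs_nonneg _) (le_trans (abs_nonneg x) hm)

set_option maxHeartbeats 1000000 in
lemma vf_lipschitz : LipschitzWith 4 vf := by
  apply LipschitzWith.of_dist_le_mul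
  intro p q
  have hfst : dist p.1 q.1 ≤ dist p q := by
    rw [Prod.dist_eq]; exact le_max_left _ _
  have hsnd : dist p.2 q.2 ≤ dist p q := by
    rw [Prod.dist_eq]; exact le_max_right _ _
  have hsnd1 : dist p.2.1 q.2.1 ≤ dist p.2 q.2 := by
    rw [Prod.dist_eq (x := p.2)]; exact le_max_left _ _
  have hsnd2 : dist p.2.2 q.2.2 ≤ dist p.2 q.2 := by
    rw [Prod.dist_eq (x := p.2)]; exact le_max_right _ _
  have hD1 : |p.1 - q.1| ≤ dist p q := by rw [← Real.dist_eq]; exact hfst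
  have hD2 : |p.2.1 - q.2.1| ≤ dist p q := by
    rw [← Real.dist_eq]; exact hsnd1.trans hsnd
  have hD3 : |p.2.2 - q.2.2| ≤ dist p q := by
    rw [← Real.dist_eq]; exact hsnd2.trans hsnd
  have hDnn : (0:ℝ) ≤ dist p q := dist_nonneg
  set D := dist p q
  have ha := clmp_mem (by norm_num : (0:ℝ) ≤ 1/10) p.1
  have hb := clmp_mem (by norm_num : (-(1/10):ℝ) ≤ 0) p.2.1
  have hc := clmp_mem (by norm_num : (2/5:ℝ) ≤ 3/5) p.2.2
  have ha' := clmp_mem (by norm_num : (0:ℝ) ≤ 1/10) q.1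
  have hb' := clmp_mem (by norm_num : (-(1/10):ℝ) ≤ 0) q.2.1
  have hc' := clmp_mem (by norm_num : (2/5:ℝ) ≤ 3/5) q.2.2
  have e1 : |clmp 0 (1/10) p.1 - clmp 0 (1/10) q.1| ≤ D :=
    le_trans (clmp_dist _ _ _ _) hD1
  have e2 : |clmp (-(1/10)) 0 p.2.1 - clmp (-(1/10)) 0 q.2.1| ≤ D :=
    le_trans (clmp_dist _ _ _ _) hD2
  have e3 : |clmp (2/5) (3/5) p.2.2 - clmp (2/5) (3/5) q.2.2| ≤ D :=
    le_trans (clmp_dist _ _ _ _) hD3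
  set a := clmp 0 (1/10) p.1 with hadef
  set b := clmp (-(1/10)) 0 p.2.1 with hbdef
  set c := clmp (2/5) (3/5) p.2.2 with hcdef
  set a' := clmp 0 (1/10) q.1 with hadef'
  set b' := clmp (-(1/10)) 0 q.2.1 with hbdef'
  set c' := clmp (2/5) (3/5) q.2.2 with hcdef'
  obtain ⟨ha1, ha2⟩ := ha; obtain ⟨hb1, hb2⟩ := hb; obtain ⟨hc1, hc2⟩ := hc
  obtain ⟨ha1', ha2'⟩ := ha'; obtain ⟨hb1', hb2'⟩ := hb'; obtain ⟨hc1', hc2'⟩ := hc'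
  have hcoe : ((4:NNReal):ℝ) = 4 := by norm_num
  have k1 := mul_abs_le (show |a| ≤ 1/10 from abs_le.2 ⟨by linarith, ha2⟩) e2
  have k2 := mul_abs_le (show |b'| ≤ 1/10 from abs_le.2 ⟨by linarith, by linarith⟩) e1
  have k3 := mul_abs_le (show |a+a'| ≤ 1/5 from abs_le.2 ⟨by linarith, by linarith⟩) e1
  have k4 := mul_abs_le (show |c| ≤ 3/5 from abs_le.2 ⟨by linarith, hc2⟩) e2
  have k5 := mul_abs_le (show |b'| ≤ 1/10 from abs_le.2 ⟨by linarith, by linarith⟩) e3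
  have k6 := mul_abs_le (show |2-a-a'| ≤ 2 from abs_le.2 ⟨by linarith, by linarith⟩) e1
  have k7 := mul_abs_le (show |b+b'| ≤ 1/5 from abs_le.2 ⟨by linarith, by linarith⟩) e2
  have k8 := mul_abs_le (show |c+c'| ≤ 6/5 from abs_le.2 ⟨by linarith, by linarith⟩) e3
  obtain ⟨k1a, k1b⟩ := k1; obtain ⟨k2a, k2b⟩ := k2; obtain ⟨k3a, k3b⟩ := k3
  obtain ⟨k4a, k4b⟩ := k4; obtain ⟨k5a, k5b⟩ := k5; obtain ⟨k6a, k6b⟩ := k6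
  obtain ⟨k7a, k7b⟩ := k7; obtain ⟨k8a, k8b⟩ := k8
  rw [show vf p = (-(a*b), -a + a^2 - 3*c*b, (1-a)^2/4 - b^2/2 - c^2) from rfl,
    show vf q = (-(a'*b'), -a' + a'^2 - 3*c'*b', (1-a')^2/4 - b'^2/2 - c'^2) from rfl,
    Prod.dist_eq, Prod.dist_eq, hcoe]
  rw [abs_le] at e1 e2 e3
  refine max_le ?_ (max_le ?_ ?_) <;> rw [Real.dist_eq, abs_le] <;> constructor <;>
    linarith

/-! Extension lemma: a nonnegative quantity with positive derivative on its zero set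
stays nonnegative a little beyond a given time. -/

lemma extend_nonneg {T τ d : ℝ} {φ : ℝ → ℝ} (hτ : τ ∈ Icc 0 T)
    (hd : HasDerivWithinAt φ d (Icc 0 T) τ) (h0 : 0 ≤ φ τ)
    (hpos : φ τ = 0 → 0 < d) :
    ∃ η > 0, ∀ t ∈ Icc 0 T, τ < t → t ≤ τ + η → 0 ≤ φ t := by
  rcases eq_or_lt_of_le h0 with heq | hlt
  · -- boundary case: use the derivative
    have hdpos : 0 < d := hpos heq.symm
    rw [hasDerivWithinAt_iff_tendsto_slope] at hd
    have hev : ∀ᶠ t in 𝓝[Icc 0 T \ {τ}] τ, 0 < slope φ τ t :=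
      hd.eventually (eventually_gt_nhds hdpos)
    rw [eventually_nhdsWithin_iff] at hev
    rw [Metric.eventually_nhds_iff] at hev
    obtain ⟨ε, hε, hball⟩ := hev
    refine ⟨ε/2, by linarith, fun t ht htτ htη => ?_⟩
    have hdist : dist t τ < ε := by
      rw [Real.dist_eq, abs_of_pos (by linarith : 0 < t - τ)]; linarith
    have hs : 0 < slope φ τ t := hball hdist ⟨ht, by simp [ne_of_gt htτ]⟩
    rw [slope_def_field] at hs
    have htpos : 0 < t - τ := by linarith
    have := mul_pos hs htpos
    rw [div_mul_cancel₀] at this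
    · linarith [this, heq]
    · exact ne_of_gt htpos
  · -- interior case: use continuity
    have hc : ContinuousWithinAt φ (Icc 0 T) τ := hd.continuousWithinAt
    have hev : ∀ᶠ t in 𝓝[Icc 0 T] τ, 0 < φ t := hc.eventually (eventually_gt_nhds hlt)
    rw [eventually_nhdsWithin_iff, Metric.eventually_nhds_iff] at hev
    obtain ⟨ε, hε, hball⟩ := hev
    refine ⟨ε/2, by linarith, fun t ht htτ htη => ?_⟩
    have hdist : dist t τ < ε := by
      rw [Real.dist_eq, abs_of_pos (by linarith : 0 < t - τ)]; linarith
    exact le_of_lt (hball hdist ht)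

/-! Monotonicity from a within-derivative bound. -/

lemma mono_of_hasDeriv {a b : ℝ} {g : ℝ → ℝ} {g' : ℝ → ℝ}
    (hg : ∀ t ∈ Icc a b, HasDerivWithinAt g (g' t) (Icc a b) t)
    (h0 : ∀ t ∈ Ioo a b, 0 ≤ g' t) : MonotoneOn g (Icc a b) := by
  apply monotoneOn_of_deriv_nonneg (convex_Icc a b)
    (fun t ht => (hg t ht).continuousWithinAt)
  · intro t ht
    rw [interior_Icc] at ht
    exact (((hg t (Ioo_subset_Icc_self ht)).hasDerivAt
      (Icc_mem_nhds ht.1 ht.2)).differentiableAt).differentiableWithinAt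
  · intro t ht
    rw [interior_Icc] at ht
    rw [((hg t (Ioo_subset_Icc_self ht)).hasDerivAt (Icc_mem_nhds ht.1 ht.2)).deriv]
    exact h0 t ht

set_option maxHeartbeats 2000000 in
/-- Theorem 1: the equilibrium `S = (u, y, ρ, H) = (0, 0, 0, 1/2)` of the
Einstein-frame system
`u' = -u y`, `y' = -u + u² - 3 H y`, `ρ' = -3 γ ρ H`,
`H' = (1/4)(1-u)² - (1/2)y² - ((3γ-2)/6)ρ - H²`
is Lyapunov unstable for every `γ ∈ [0, 2]`: there is `ε > 0` so that arbitrarily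
close to `S` there start solutions which leave the `ε`-ball around `S`
(distances measured in the Euclidean norm on `ℝ⁴`). -/
theorem deSitter_equilibrium_unstable
    (γ : ℝ) (hγ : γ ∈ Set.Icc (0 : ℝ) 2) :
    ∃ ε > (0 : ℝ), ∀ δ > (0 : ℝ),
      ∃ (u y ρ H : ℝ → ℝ) (T : ℝ), 0 < T ∧
        (∀ t ∈ Set.Icc (0 : ℝ) T,
          HasDerivWithinAt u (-(u t * y t)) (Set.Icc (0 : ℝ) T) t ∧
          HasDerivWithinAt y (-(u t) + u t ^ 2 - 3 * H t * y t) (Set.Icc (0 : ℝ) T) t ∧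
          HasDerivWithinAt ρ (-(3 * γ * ρ t * H t)) (Set.Icc (0 : ℝ) T) t ∧
          HasDerivWithinAt H
            (1 / 4 * (1 - u t) ^ 2 - 1 / 2 * y t ^ 2 - (3 * γ - 2) / 6 * ρ t - H t ^ 2)
            (Set.Icc (0 : ℝ) T) t) ∧
        Real.sqrt (u 0 ^ 2 + y 0 ^ 2 + ρ 0 ^ 2 + (H 0 - 1 / 2) ^ 2) < δ ∧
        Real.sqrt (u T ^ 2 + y T ^ 2 + ρ T ^ 2 + (H T - 1 / 2) ^ 2) > ε := by
  refine ⟨1/20, by norm_num, fun δ hδ => ?_⟩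
  -- initial displacement and time horizon
  set u₀ : ℝ := min (δ/4) (1/100) with hu₀def
  have hu₀pos : 0 < u₀ := lt_min (by linarith) (by norm_num)
  have hu₀le : u₀ ≤ 1/100 := min_le_right _ _
  have hu₀δ : u₀ ≤ δ/4 := min_le_left _ _
  set T₀ : ℝ := 1/u₀^2 with hT₀def
  have hT₀pos : 0 < T₀ := by positivity
  set x₀ : ℝ × ℝ × ℝ := (u₀, -(u₀/2), 1/2) with hx₀def
  -- Picard–Lindelöf for the clamped field
  have hpl : IsPicardLindelof (fun _ : ℝ => vf) (tmin := 0) (tmax := T₀)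
      ⟨0, left_mem_Icc.2 hT₀pos.le⟩ x₀ ⟨T₀, hT₀pos.le⟩ 0 1 4 :=
    IsPicardLindelof.of_time_independent (fun x _ => vf_bound x) vf_lipschitz.lipschitzOnWith
      (by
        show (1:ℝ) * max (T₀ - 0) (0 - 0) ≤ T₀ - 0
        rw [sub_zero, sub_zero, max_eq_left hT₀pos.le, one_mul])
  obtain ⟨F, hF0, hF'⟩ := hpl.exists_eq_forall_mem_Icc_hasDerivWithinAt₀
  set uu : ℝ → ℝ := fun t => (F t).1 with huu
  set yy : ℝ → ℝ := fun t => (F t).2.1 with hyy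
  set hh : ℝ → ℝ := fun t => (F t).2.2 with hhh
  have huu0 : uu 0 = u₀ := congrArg Prod.fst hF0
  have hyy0 : yy 0 = -(u₀/2) := congrArg (fun p : ℝ × ℝ × ℝ => p.2.1) hF0
  have hhh0 : hh 0 = 1/2 := congrArg (fun p : ℝ × ℝ × ℝ => p.2.2) hF0
  -- component derivatives
  have hu' : ∀ t ∈ Icc (0:ℝ) T₀, HasDerivWithinAt uu ((vf (F t)).1) (Icc 0 T₀) t := by
    intro t ht
    exact (ContinuousLinearMap.fst ℝ ℝ (ℝ × ℝ)).hasFDerivAt.comp_hasDerivWithinAt t (hF' t ht)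
  have hy' : ∀ t ∈ Icc (0:ℝ) T₀, HasDerivWithinAt yy ((vf (F t)).2.1) (Icc 0 T₀) t := by
    intro t ht
    exact ((ContinuousLinearMap.fst ℝ ℝ ℝ).comp
      (ContinuousLinearMap.snd ℝ ℝ (ℝ × ℝ))).hasFDerivAt.comp_hasDerivWithinAt t (hF' t ht)
  have hw' : ∀ t ∈ Icc (0:ℝ) T₀, HasDerivWithinAt hh ((vf (F t)).2.2) (Icc 0 T₀) t := by
    intro t ht
    exact ((ContinuousLinearMap.snd ℝ ℝ ℝ).comp
      (ContinuousLinearMap.snd ℝ ℝ (ℝ × ℝ))).hasFDerivAt.comp_hasDerivWithinAt t (hF' t ht)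
  -- u is monotone on the whole interval
  have humono : MonotoneOn uu (Icc 0 T₀) :=
    mono_of_hasDeriv hu' (fun t _ => vf_fst_nonneg (F t))
  have hulb : ∀ t ∈ Icc (0:ℝ) T₀, u₀ ≤ uu t := by
    intro t ht
    have := humono (left_mem_Icc.2 hT₀pos.le) ht ht.1
    rwa [huu0] at this
  -- the trapping region
  set Q : ℝ → Prop := fun s =>
    uu s ≤ 1/10 ∧ 3*yy s ≤ -(uu s) ∧ -(uu s) ≤ yy s ∧ 2/5 ≤ hh s ∧ hh s ≤ 3/5
    with hQdef
  -- explicit values of the field inside the region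
  have hvf : ∀ t ∈ Icc (0:ℝ) T₀, Q t →
      vf (F t) = (-(uu t * yy t),
        -(uu t) + (uu t)^2 - 3 * hh t * yy t,
        (1 - uu t)^2/4 - (yy t)^2/2 - (hh t)^2) := by
    intro t ht hQ
    obtain ⟨q1, q2, q3, q4, q5⟩ := hQ
    have hu0 : 0 ≤ uu t := le_trans hu₀pos.le (hulb t ht)
    have hy0 : yy t ≤ 0 := by nlinarith
    have hylb : -(1/10) ≤ yy t := by nlinarith
    exact vf_eq hu0 q1 hylb hy0 q4 q5
  set S : Set ℝ := {t | t ∈ Icc 0 T₀ ∧ ∀ s ∈ Icc 0 t, Q s} with hSdef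
  have hQ0 : Q 0 := by
    simp only [hQdef, huu0, hyy0, hhh0]
    refine ⟨by linarith, by linarith, by linarith, by norm_num, by norm_num⟩
  have hS0 : (0:ℝ) ∈ S := by
    refine ⟨⟨le_refl 0, hT₀pos.le⟩, fun s hs => ?_⟩
    have : s = 0 := le_antisymm hs.2 hs.1
    rwa [this]
  have hSne : S.Nonempty := ⟨0, hS0⟩
  have hSbdd : BddAbove S := ⟨T₀, fun x hx => hx.1.2⟩
  set τ : ℝ := sSup S with hτdef
  have hτ0 : 0 ≤ τ := le_csSup hSbdd hS0
  have hτT : τ ≤ T₀ := csSup_le hSne (fun x hx => hx.1.2)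
  have hτmem : τ ∈ Icc (0:ℝ) T₀ := ⟨hτ0, hτT⟩
  -- region conditions hold strictly below τ
  have hQlt : ∀ s, 0 ≤ s → s < τ → Q s := by
    intro s hs0 hsτ
    obtain ⟨t, htS, hst⟩ := exists_lt_of_lt_csSup hSne hsτ
    exact htS.2 s ⟨hs0, hst.le⟩
  -- region conditions hold on all of [0, τ]
  have hQall : ∀ s ∈ Icc (0:ℝ) τ, Q s := by
    intro s hs
    rcases lt_or_eq_of_le hs.2 with h | h
    · exact hQlt s hs.1 h
    · subst h
      rcases eq_or_lt_of_le hτ0 with h0 | h0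
      · rw [← h0]; exact hQ0
      · -- limit argument at τ
        haveI : Filter.NeBot (nhdsWithin τ (Ico 0 τ)) := right_nhdsWithin_Ico_neBot h0
        have hsub : Ico (0:ℝ) τ ⊆ Icc 0 T₀ := fun x hx => ⟨hx.1, le_trans hx.2.le hτT⟩
        have hmem : ∀ x ∈ Ico (0:ℝ) τ, Q x := fun x hx => hQlt x hx.1 hx.2
        have htu : Filter.Tendsto uu (nhdsWithin τ (Ico 0 τ)) (nhds (uu τ)) :=
          ((hu' τ hτmem).continuousWithinAt).mono_left (nhdsWithin_mono _ hsub)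
        have hty : Filter.Tendsto yy (nhdsWithin τ (Ico 0 τ)) (nhds (yy τ)) :=
          ((hy' τ hτmem).continuousWithinAt).mono_left (nhdsWithin_mono _ hsub)
        have htw : Filter.Tendsto hh (nhdsWithin τ (Ico 0 τ)) (nhds (hh τ)) :=
          ((hw' τ hτmem).continuousWithinAt).mono_left (nhdsWithin_mono _ hsub)
        refine ⟨?_, ?_, ?_, ?_, ?_⟩
        · exact le_of_tendsto htu (eventually_nhdsWithin_of_forall (fun x hx => (hmem x hx).1))
        · have : Filter.Tendsto (fun s => -(uu s) - 3*yy s)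
              (nhdsWithin τ (Ico 0 τ)) (nhds (-(uu τ) - 3*yy τ)) :=
            (htu.neg).sub (hty.const_mul 3)
          have h : (0:ℝ) ≤ -(uu τ) - 3*yy τ :=
            ge_of_tendsto this (eventually_nhdsWithin_of_forall (fun x hx => by
              have := (hmem x hx).2.1
              show (0:ℝ) ≤ -(uu x) - 3*yy x
              linarith))
          linarith
        · have : Filter.Tendsto (fun s => yy s + uu s)
              (nhdsWithin τ (Ico 0 τ)) (nhds (yy τ + uu τ)) := hty.add htu
          have h : (0:ℝ) ≤ yy τ + uu τ :=
            ge_of_tendsto this (eventually_nhdsWithin_of_forall (fun x hx => by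
              have := (hmem x hx).2.2.1
              show (0:ℝ) ≤ yy x + uu x
              linarith))
          linarith
        · exact ge_of_tendsto htw (eventually_nhdsWithin_of_forall (fun x hx => (hmem x hx).2.2.2.1))
        · exact le_of_tendsto htw (eventually_nhdsWithin_of_forall (fun x hx => (hmem x hx).2.2.2.2))
  have hQτ : Q τ := hQall τ ⟨hτ0, le_refl τ⟩
  -- τ < T₀ (else u would have grown past 1/10)
  have hτltT : τ < T₀ := by
    by_contra hcon
    have hτeq : τ = T₀ := le_antisymm hτT (not_lt.1 hcon)
    -- ψ(t) = uu t - u₀²/3 · t is monotone on [0, T₀]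
    have hψ : MonotoneOn (fun t => uu t - u₀^2/3 * t) (Icc 0 T₀) := by
      apply mono_of_hasDeriv (g' := fun t => (vf (F t)).1 - u₀^2/3)
      · intro t ht
        exact (hu' t ht).sub (((hasDerivWithinAt_id t _).const_mul (u₀^2/3)).congr_deriv
          (by ring))
      · intro t ht
        have htI : t ∈ Icc (0:ℝ) T₀ := Ioo_subset_Icc_self ht
        have hQt : Q t := hQall t (by rw [hτeq]; exact htI)
        rw [hvf t htI hQt]
        obtain ⟨q1, q2, q3, q4, q5⟩ := hQt
        have hul := hulb t htI
        simp only
        nlinarith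
    have h1 := hψ (left_mem_Icc.2 hT₀pos.le) (right_mem_Icc.2 hT₀pos.le) hT₀pos.le
    simp only [huu0] at h1
    have hT₀val : u₀^2/3 * T₀ = 1/3 := by
      rw [hT₀def]; field_simp
    have hQT : Q T₀ := by rw [← hτeq]; exact hQτ
    have : uu T₀ ≤ 1/10 := hQT.1
    rw [mul_zero, sub_zero] at h1
    nlinarith
  -- main dichotomy
  by_cases hexit : uu τ = 1/10
  · -- the solution escapes at time τ
    have hτpos : 0 < τ := by
      rcases eq_or_lt_of_le hτ0 with h | h
      · exfalso; rw [← h, huu0] at hexit; rw [hexit] at hu₀le; norm_num at hu₀le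
      · exact h
    have hsub : Icc (0:ℝ) τ ⊆ Icc 0 T₀ := Icc_subset_Icc (le_refl 0) hτT
    refine ⟨uu, yy, fun _ => 0, hh, τ, hτpos, ?_, ?_, ?_⟩
    · intro t ht
      have htI : t ∈ Icc (0:ℝ) T₀ := hsub ht
      have hQt : Q t := hQall t ht
      have hval := hvf t htI hQt
      refine ⟨?_, ?_, ?_, ?_⟩
      · have := ((hu' t htI).mono hsub)
        rwa [hval] at this
      · have := ((hy' t htI).mono hsub)
        rw [hval] at this
        convert this using 1 <;> ring
      · have : HasDerivWithinAt (fun _ : ℝ => (0:ℝ)) 0 (Icc 0 τ) t :=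
          hasDerivWithinAt_const t _ 0
        convert this using 1 <;> ring
      · have := ((hw' t htI).mono hsub)
        rw [hval] at this
        exact this.congr_deriv (by beta_reduce; ring)
    · rw [huu0, hyy0, hhh0]
      rw [Real.sqrt_lt' hδ]
      nlinarith
    · rw [gt_iff_lt, show ((fun _:ℝ => (0:ℝ)) τ) = 0 from rfl]
      rw [Real.lt_sqrt (by norm_num)]
      rw [hexit]
      nlinarith [sq_nonneg (yy τ), sq_nonneg (hh τ - 1/2)]
  · -- otherwise we can extend the region past τ : contradiction
    exfalso
    have hulτ : u₀ ≤ uu τ := hulb τ hτmem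
    have huup : uu τ < 1/10 := lt_of_le_of_ne hQτ.1 hexit
    obtain ⟨q1, q2, q3, q4, q5⟩ := hQτ
    have hvalτ := hvf τ hτmem ⟨q1, q2, q3, q4, q5⟩
    -- derivative components at τ
    have hDu := hu' τ hτmem
    have hDy := hy' τ hτmem
    have hDw := hw' τ hτmem
    rw [hvalτ] at hDu hDy hDw
    simp only at hDu hDy hDw
    -- five boundary functions
    have hφ1 : ∃ η > (0:ℝ), ∀ t ∈ Icc (0:ℝ) T₀, τ < t → t ≤ τ + η → 0 ≤ 1/10 - uu t := by
      apply extend_nonneg hτmem ((hasDerivWithinAt_const τ _ (1/10)).sub hDu)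
        (by simp only [Pi.add_apply, Pi.sub_apply, Pi.neg_apply]; linarith)
      intro h; simp only [Pi.add_apply, Pi.sub_apply, Pi.neg_apply] at h; exfalso; linarith
    have hφ2 : ∃ η > (0:ℝ), ∀ t ∈ Icc (0:ℝ) T₀, τ < t → t ≤ τ + η →
        0 ≤ -(uu t) - 3*yy t := by
      apply extend_nonneg hτmem (hDu.neg.sub (hDy.const_mul 3)) (by simp only [Pi.add_apply, Pi.sub_apply, Pi.neg_apply]; linarith)
      intro h
      simp only [Pi.add_apply, Pi.sub_apply, Pi.neg_apply] at h
      have hy : 3*yy τ = -(uu τ) := by linarith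
      nlinarith
    have hφ3 : ∃ η > (0:ℝ), ∀ t ∈ Icc (0:ℝ) T₀, τ < t → t ≤ τ + η →
        0 ≤ yy t + uu t := by
      apply extend_nonneg hτmem (hDy.add hDu) (by simp only [Pi.add_apply, Pi.sub_apply, Pi.neg_apply]; linarith)
      intro h
      simp only [Pi.add_apply, Pi.sub_apply, Pi.neg_apply] at h
      have hy : yy τ = -(uu τ) := by linarith
      nlinarith
    have hφ4 : ∃ η > (0:ℝ), ∀ t ∈ Icc (0:ℝ) T₀, τ < t → t ≤ τ + η →
        0 ≤ hh t - 2/5 := by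
      apply extend_nonneg hτmem (hDw.sub (hasDerivWithinAt_const τ _ (2/5))) (by simp only [Pi.add_apply, Pi.sub_apply, Pi.neg_apply]; linarith)
      intro h
      simp only [Pi.add_apply, Pi.sub_apply, Pi.neg_apply] at h
      have hw : hh τ = 2/5 := by linarith
      have hysq : (yy τ)^2 ≤ (uu τ)^2 := by nlinarith
      rw [sub_zero]
      nlinarith
    have hφ5 : ∃ η > (0:ℝ), ∀ t ∈ Icc (0:ℝ) T₀, τ < t → t ≤ τ + η →
        0 ≤ 3/5 - hh t := by
      apply extend_nonneg hτmem ((hasDerivWithinAt_const τ _ (3/5)).sub hDw) (by simp only [Pi.add_apply, Pi.sub_apply, Pi.neg_apply]; linarith)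
      intro h
      simp only [Pi.add_apply, Pi.sub_apply, Pi.neg_apply] at h
      have hw : hh τ = 3/5 := by linarith
      rw [zero_sub, lt_neg]
      nlinarith
    obtain ⟨η1, hη1, h1⟩ := hφ1
    obtain ⟨η2, hη2, h2⟩ := hφ2
    obtain ⟨η3, hη3, h3⟩ := hφ3
    obtain ⟨η4, hη4, h4⟩ := hφ4
    obtain ⟨η5, hη5, h5⟩ := hφ5
    set η := min η1 (min η2 (min η3 (min η4 η5))) with hηdef
    have hηpos : 0 < η := by
      simp only [hηdef, lt_min_iff]
      exact ⟨hη1, hη2, hη3, hη4, hη5⟩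
    set t' := min (τ + η) T₀ with ht'def
    have ht'τ : τ < t' := lt_min (by linarith) hτltT
    have ht'T : t' ≤ T₀ := min_le_right _ _
    have ht'S : t' ∈ S := by
      refine ⟨⟨by linarith, ht'T⟩, fun s hs => ?_⟩
      rcases le_or_gt s τ with hsτ | hsτ
      · exact hQall s ⟨hs.1, hsτ⟩
      · have hsI : s ∈ Icc (0:ℝ) T₀ := ⟨hs.1, le_trans hs.2 ht'T⟩
        have hsη : s ≤ τ + η := le_trans hs.2 (min_le_left _ _)
        have e1 := h1 s hsI hsτ (le_trans hsη (by
          simp only [hηdef]; gcongr; exact min_le_left _ _))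
        have e2 := h2 s hsI hsτ (le_trans hsη (by
          simp only [hηdef]; gcongr
          exact le_trans (min_le_right _ _) (min_le_left _ _)))
        have e3 := h3 s hsI hsτ (le_trans hsη (by
          simp only [hηdef]; gcongr
          exact le_trans (min_le_right _ _) (le_trans (min_le_right _ _) (min_le_left _ _))))
        have e4 := h4 s hsI hsτ (le_trans hsη (by
          simp only [hηdef]; gcongr
          exact le_trans (min_le_right _ _) (le_trans (min_le_right _ _)
            (le_trans (min_le_right _ _) (min_le_left _ _)))))
        have e5 := h5 s hsI hsτ (le_trans hsη (by
          simp only [hηdef]; gcongr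
          exact le_trans (min_le_right _ _) (le_trans (min_le_right _ _)
            (le_trans (min_le_right _ _) (min_le_right _ _)))))
        exact ⟨by linarith, by linarith, by linarith, by linarith, by linarith⟩
    have : t' ≤ τ := le_csSup hSbdd ht'S
    linarith
end
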